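/- arXiv:1903.09165 — 10 statements merged into one kernel-verified Lean document; each statement's English description precedes it below -/
import Mathlib

section
/- Let g be a Lie algebra over a field k with a nondegenerate invariant symmetric bilinear form B_g, let h be a Lie algebra over k, and let ρ be a Lie algebra homomorphism from h to the derivations of g such that B_g(ρ(a)x, y) + B_g(x, ρ(a)y) = 0 for all a in h and x, y in g. Then the double extension bracket on g ⊕ h ⊕ h* satisfies the Jacobi identity (so D(g,h) is a Lie algebra), and for every invariant symmetric bilinear form h₀ on h the bilinear form Ω((x,a,α),(y,b,β)) = B_g(x,y) + h₀(a,b) + α(b) + β(a) is symmetric, invariant, and nondegenerate on D(g,h). -/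
section DoubleExtension

variable (k : Type*) [Field k] (g h : Type*)
  [LieRing g] [LieAlgebra k g] [LieRing h] [LieAlgebra k h]

/-- The element `γ(x,y) ∈ h*` given by `γ(x,y)(c) = B_g(ρ(c)x, y)`. -/
def doubleExtGamma (Bg : g →ₗ[k] g →ₗ[k] k) (ρ : h →ₗ⁅k⁆ LieDerivation k g g)
    (x y : g) : Module.Dual k h where
  toFun c := Bg (ρ c x) y
  map_add' c₁ c₂ := by simp
  map_smul' t c := by simp

/-- The double-extension bracket on `g ⊕ h ⊕ h*`:
`[(x,a,α),(y,b,β)] = ([x,y] + ρ(a)y − ρ(b)x, [a,b], γ(x,y) − β∘ad_a + α∘ad_b)`. -/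
def doubleExtBracket (Bg : g →ₗ[k] g →ₗ[k] k) (ρ : h →ₗ⁅k⁆ LieDerivation k g g)
    (u v : g × h × Module.Dual k h) : g × h × Module.Dual k h :=
  (⁅u.1, v.1⁆ + ρ u.2.1 v.1 - ρ v.2.1 u.1,
   ⁅u.2.1, v.2.1⁆,
   doubleExtGamma k g h Bg ρ u.1 v.1
     - v.2.2 ∘ₗ LieAlgebra.ad k h u.2.1 + u.2.2 ∘ₗ LieAlgebra.ad k h v.2.1)

/-- The canonical bilinear form `Ω` on the double extension `g ⊕ h ⊕ h*`:
`Ω((x,a,α),(y,b,β)) = B_g(x,y) + h₀(a,b) + α(b) + β(a)`. -/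
def doubleExtForm (Bg : g →ₗ[k] g →ₗ[k] k) (h₀ : h →ₗ[k] h →ₗ[k] k)
    (u v : g × h × Module.Dual k h) : k :=
  Bg u.1 v.1 + h₀ u.2.1 v.2.1 + u.2.2 v.2.1 + v.2.2 u.2.1

end DoubleExtension

section Aux

variable {k : Type*} [Field k] {g h : Type*}
  [LieRing g] [LieAlgebra k g] [LieRing h] [LieAlgebra k h]

/-- Auxiliary: cyclic identity for `B_g(ρ(d)x, [y,z])`. -/
lemma doubleExt_keyL (Bg : g →ₗ[k] g →ₗ[k] k)
    (hBgsymm : ∀ x y : g, Bg x y = Bg y x)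
    (hBginv : ∀ x y z : g, Bg ⁅z, x⁆ y + Bg x ⁅z, y⁆ = 0)
    (ρ : h →ₗ⁅k⁆ LieDerivation k g g)
    (hanti : ∀ (a : h) (x y : g), Bg (ρ a x) y + Bg x (ρ a y) = 0)
    (d : h) (x y z : g) :
    Bg (ρ d x) ⁅y,z⁆ + Bg (ρ d y) ⁅z,x⁆ + Bg (ρ d z) ⁅x,y⁆ = 0 := by
  have H1 := hanti d x ⁅y,z⁆
  rw [LieDerivation.apply_lie_eq_add, map_add] at H1
  have H2 : Bg x ⁅y, ρ d z⁆ = Bg (ρ d z) ⁅x, y⁆ := by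
    have i := hBginv x (ρ d z) y
    rw [← lie_skew y x, map_neg, LinearMap.neg_apply] at i
    linear_combination i + hBgsymm ⁅x,y⁆ (ρ d z)
  have H3 : Bg x ⁅ρ d y, z⁆ = Bg (ρ d y) ⁅z, x⁆ := by
    have i := hBginv x z (ρ d y)
    have i2 := hBginv (ρ d y) z x
    rw [← lie_skew (ρ d y) x, map_neg, LinearMap.neg_apply] at i
    rw [← lie_skew x z, map_neg] at i2
    linear_combination i + i2
  linear_combination H1 - H2 - H3

/-- Auxiliary: the `g`-component of the Jacobi identity for the double extension. -/
lemma doubleExt_jacg (ρ : h →ₗ⁅k⁆ LieDerivation k g g) (x y z : g) (a b c : h) :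
    (⁅x, ⁅y,z⁆ + ρ b z - ρ c y⁆ + ρ a (⁅y,z⁆ + ρ b z - ρ c y) - ρ ⁅b,c⁆ x)
  + (⁅y, ⁅z,x⁆ + ρ c x - ρ a z⁆ + ρ b (⁅z,x⁆ + ρ c x - ρ a z) - ρ ⁅c,a⁆ y)
  + (⁅z, ⁅x,y⁆ + ρ a y - ρ b x⁆ + ρ c (⁅x,y⁆ + ρ a y - ρ b x) - ρ ⁅a,b⁆ z) = 0 := by
  have sk : ∀ (a0 : h) (p q : g), ⁅(ρ a0) p, q⁆ = -⁅q, (ρ a0) p⁆ :=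
    fun a0 p q => (lie_skew _ _).symm
  have j : ⁅z,⁅x,y⁆⁆ = -⁅x,⁅y,z⁆⁆ - ⁅y,⁅z,x⁆⁆ := by
    have h0 := lie_jacobi x y z
    have h1 : ⁅z,⁅x,y⁆⁆ = ⁅x, ⁅y, z⁆⁆ + ⁅y, ⁅z, x⁆⁆ + ⁅z, ⁅x, y⁆⁆ - ⁅x,⁅y,z⁆⁆ - ⁅y,⁅z,x⁆⁆ := by
      abel
    rw [h1, h0]; abel
  simp only [lie_add, lie_sub, map_add, map_sub, LieHom.map_lie, LieDerivation.lie_apply,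
    LieDerivation.apply_lie_eq_add, sk, j]
  abel

end Aux

/-- Given a Lie algebra `g` with a nondegenerate invariant symmetric bilinear
form `B_g`, a Lie algebra `h` acting on `g` by `B_g`-antisymmetric derivations via a Lie
algebra homomorphism `ρ`, the double-extension bracket on `g ⊕ h ⊕ h*` satisfies the Jacobi
identity, and for every invariant symmetric bilinear form `h₀` on `h` the form `Ω` is
symmetric, invariant and nondegenerate. -/
theorem double_extension_is_metric
    (k : Type*) [Field k] (g h : Type*)
    [LieRing g] [LieAlgebra k g] [LieRing h] [LieAlgebra k h]
    (Bg : g →ₗ[k] g →ₗ[k] k)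
    (hBgsymm : ∀ x y : g, Bg x y = Bg y x)
    (hBginv : ∀ x y z : g, Bg ⁅z, x⁆ y + Bg x ⁅z, y⁆ = 0)
    (hBgnondeg : ∀ x : g, (∀ y : g, Bg x y = 0) → x = 0)
    (ρ : h →ₗ⁅k⁆ LieDerivation k g g)
    (hanti : ∀ (a : h) (x y : g), Bg (ρ a x) y + Bg x (ρ a y) = 0) :
    (∀ u v w : g × h × Module.Dual k h,
        doubleExtBracket k g h Bg ρ u (doubleExtBracket k g h Bg ρ v w) +
          doubleExtBracket k g h Bg ρ v (doubleExtBracket k g h Bg ρ w u) +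
            doubleExtBracket k g h Bg ρ w (doubleExtBracket k g h Bg ρ u v) = 0) ∧
    (∀ h₀ : h →ₗ[k] h →ₗ[k] k,
        (∀ a b : h, h₀ a b = h₀ b a) →
        (∀ a b c : h, h₀ ⁅c, a⁆ b + h₀ a ⁅c, b⁆ = 0) →
        (∀ u v : g × h × Module.Dual k h,
            doubleExtForm k g h Bg h₀ u v = doubleExtForm k g h Bg h₀ v u) ∧
        (∀ u v w : g × h × Module.Dual k h,
            doubleExtForm k g h Bg h₀ (doubleExtBracket k g h Bg ρ w u) v +
              doubleExtForm k g h Bg h₀ u (doubleExtBracket k g h Bg ρ w v) = 0) ∧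
        (∀ u : g × h × Module.Dual k h,
            (∀ v : g × h × Module.Dual k h, doubleExtForm k g h Bg h₀ u v = 0) → u = 0)) := by
  constructor
  · rintro ⟨x, a, α⟩ ⟨y, b, β⟩ ⟨z, c, γ'⟩
    simp only [doubleExtBracket, Prod.mk_add_mk, Prod.mk_eq_zero]
    refine ⟨?_, ?_, ?_⟩
    · exact doubleExt_jacg ρ x y z a b c
    · exact lie_jacobi a b c
    · apply LinearMap.ext
      intro d
      simp only [doubleExtGamma, LinearMap.add_apply, LinearMap.sub_apply, LinearMap.zero_apply,
        LinearMap.comp_apply, LinearMap.coe_mk, AddHom.coe_mk, LieAlgebra.ad_apply,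
        map_add, map_sub, LieHom.map_lie, LieDerivation.lie_apply, lie_lie,
        LinearMap.neg_apply, Ring.lie_def, Module.End.mul_apply]
      linear_combination (doubleExt_keyL Bg hBgsymm hBginv ρ hanti d x y z)
        - hanti a (ρ d y) z + hanti d (ρ a y) z + hBgsymm (ρ d z) (ρ a y)
        - hanti b (ρ d z) x + hanti d (ρ b z) x + hBgsymm (ρ d x) (ρ b z)
        - hanti c (ρ d x) y + hanti d (ρ c x) y + hBgsymm (ρ d y) (ρ c x)
  · intro h₀ h₀symm h₀inv
    refine ⟨?_, ?_, ?_⟩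
    · rintro ⟨x, a, α⟩ ⟨y, b, β⟩
      simp only [doubleExtForm]
      linear_combination hBgsymm x y + h₀symm a b
    · rintro ⟨x, a, α⟩ ⟨y, b, β⟩ ⟨z, c, γ'⟩
      have hsk : γ' ⁅b, a⁆ = -γ' ⁅a, b⁆ := by rw [← lie_skew a b, map_neg, neg_neg]
      simp only [doubleExtForm, doubleExtBracket, doubleExtGamma, LinearMap.add_apply,
        LinearMap.sub_apply, LinearMap.comp_apply, LinearMap.coe_mk, AddHom.coe_mk,
        LieAlgebra.ad_apply, map_add, map_sub, LinearMap.neg_apply]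
      linear_combination hBginv x y z + hanti c x y + h₀inv a b c
        + hanti b z x - hanti b x z + hBgsymm (ρ b x) z + hsk
    · rintro ⟨x, a, α⟩ hu
      have hx : x = 0 := hBgnondeg x (fun y => by simpa [doubleExtForm] using hu (y, 0, 0))
      have ha : a = 0 :=
        (Module.forall_dual_apply_eq_zero_iff k a).mp
          (fun φ => by simpa [doubleExtForm] using hu (0, 0, φ))
      have hα : α = 0 := by
        ext b
        simpa [doubleExtForm, ha] using hu (0, b, 0)
      simp [Prod.ext_iff, hx, ha, hα]
end

section
/- For every choice of real parameters c, τ, Λ and sign σ ∈ {1, −1}, the six-dimensional real vector space with basis {J, B_1, B_2, H, P_1, P_2} and brackets [J,B_a] = ε_{am}B_m, [J,P_a] = ε_{am}P_m, [B_a,B_b] = −ε_{ab}τ²c²J, [B_a,H] = −ε_{am}τ²P_m, [B_a,P_b] = −ε_{ab}c²H, [H,P_a] = σΛ²ε_{am}B_m, [P_a,P_b] = −σε_{ab}Λ²c²J, [J,H] = 0 satisfies the Jacobi identity; for all real μ, χ the symmetric bilinear form determined by B(H,J) = −μ, B(P_a,B_b) = c²μδ_{ab}, B(J,J) = −χ,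 B(B_a,B_b) = c²τ²χδ_{ab}, B(H,H) = −σΛ²τ²χ, B(P_a,P_b) = σc²Λ²χδ_{ab}, with all other basis pairings zero, is invariant; and this form is nondegenerate if and only if c ≠ 0 and μ² − σΛ²τ²χ² ≠ 0. -/
/-- The two-dimensional antisymmetric symbol, `ε 0 1 = 1 = −ε 1 0`. -/
def eps : Fin 2 → Fin 2 → ℝ := ![![0, 1], ![-1, 0]]

lemma span_all {V : Type*} [AddCommGroup V] [Module ℝ V] {n : ℕ} (e : Fin n → V)
    (hspan : Submodule.span ℝ (Set.range e) = ⊤) (p : V → Prop)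
    (h0 : p 0) (hadd : ∀ x y, p x → p y → p (x + y))
    (hsmul : ∀ (c : ℝ) x, p x → p (c • x)) (hb : ∀ i, p (e i)) : ∀ x, p x := by
  intro x
  have hx : x ∈ Submodule.span ℝ (Set.range e) := hspan ▸ Submodule.mem_top
  induction hx using Submodule.span_induction with
  | mem x hx => obtain ⟨i, rfl⟩ := hx; exact hb i
  | zero => exact h0
  | add x y _ _ hx hy => exact hadd x y hx hy
  | smul c x _ hx => exact hsmul c x hx

lemma tri_ind {V W : Type*} [AddCommGroup V] [Module ℝ V] [AddCommGroup W] [Module ℝ W]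
    {n : ℕ} (e : Fin n → V) (hspan : Submodule.span ℝ (Set.range e) = ⊤)
    (T : V → V → V → W)
    (h1a : ∀ x x' y z, T (x + x') y z = T x y z + T x' y z)
    (h1s : ∀ (c : ℝ) x y z, T (c • x) y z = c • T x y z)
    (h2a : ∀ x y y' z, T x (y + y') z = T x y z + T x y' z)
    (h2s : ∀ (c : ℝ) x y z, T x (c • y) z = c • T x y z)
    (h3a : ∀ x y z z', T x y (z + z') = T x y z + T x y z')
    (h3s : ∀ (c : ℝ) x y z, T x y (c • z) = c • T x y z)
    (hb : ∀ i j k, T (e i) (e j) (e k) = 0) : ∀ x y z, T x y z = 0 := by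
  have z3 : ∀ x y, T x y 0 = 0 := fun x y => by
    rw [show (0 : V) = (0:ℝ) • (0:V) by simp, h3s]; simp
  have z2 : ∀ x z, T x 0 z = 0 := fun x z => by
    rw [show (0 : V) = (0:ℝ) • (0:V) by simp, h2s]; simp
  have z1 : ∀ y z, T 0 y z = 0 := fun y z => by
    rw [show (0 : V) = (0:ℝ) • (0:V) by simp, h1s]; simp
  have step3 : ∀ i j z, T (e i) (e j) z = 0 := fun i j =>
    span_all e hspan _ (z3 _ _)
      (fun z z' hz hz' => by rw [h3a, hz, hz', add_zero])
      (fun c z hz => by rw [h3s, hz, smul_zero]) (hb i j)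
  have step2 : ∀ i y, ∀ z, T (e i) y z = 0 := fun i =>
    span_all e hspan (fun y => ∀ z, T (e i) y z = 0) (fun z => z2 _ _)
      (fun y y' hy hy' z => by rw [h2a, hy, hy', add_zero])
      (fun c y hy z => by rw [h2s, hy, smul_zero]) (step3 i)
  exact fun x =>
    span_all e hspan (fun x => ∀ y z, T x y z = 0) (fun y z => z1 _ _)
      (fun x x' hx hx' y z => by rw [h1a, hx, hx', add_zero])
      (fun c x hx y z => by rw [h1s, hx, smul_zero]) step2 x

lemma solve2 {A B C u v : ℝ} (hdet : A * C - B * B ≠ 0)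
    (h1 : A * u + B * v = 0) (h2 : B * u + C * v = 0) : u = 0 ∧ v = 0 := by
  constructor
  · have h : (A * C - B * B) * u = C * (A * u + B * v) - B * (B * u + C * v) := by ring
    rw [h1, h2] at h; simp at h
    exact h.resolve_left hdet
  · have h : (A * C - B * B) * v = A * (B * u + C * v) - B * (A * u + B * v) := by ring
    rw [h1, h2] at h; simp at h
    exact h.resolve_left hdet

set_option maxHeartbeats 4000000 in
/-- The (A)dS family of kinematical algebras in 2+1 dimensions with
contraction parameters `c, τ, Λ` and sign `σ`: the bracket satisfies the Jacobi identity;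
for all `μ, χ` the indicated symmetric bilinear form is invariant; and it is nondegenerate
iff `c ≠ 0` and `μ² − σΛ²τ²χ² ≠ 0`. -/
theorem kinematical_ads_family_CS
    (c τ Λ σ μ χ : ℝ) (hσ : σ = 1 ∨ σ = -1)
    (V : Type*) [AddCommGroup V] [Module ℝ V]
    (J H : V) (B P : Fin 2 → V)
    (hindep : LinearIndependent ℝ ![J, B 0, B 1, H, P 0, P 1])
    (hspan : Submodule.span ℝ (Set.range ![J, B 0, B 1, H, P 0, P 1]) = ⊤)
    (br : V →ₗ[ℝ] V →ₗ[ℝ] V)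
    (hbr_anti : ∀ x y : V, br x y = - br y x)
    (hJB : ∀ a, br J (B a) = ∑ m, eps a m • B m)
    (hJP : ∀ a, br J (P a) = ∑ m, eps a m • P m)
    (hBB : ∀ a b, br (B a) (B b) = (-(eps a b * τ ^ 2 * c ^ 2)) • J)
    (hBH : ∀ a, br (B a) H = ∑ m, (-(eps a m * τ ^ 2)) • P m)
    (hBP : ∀ a b, br (B a) (P b) = (-(eps a b * c ^ 2)) • H)
    (hHP : ∀ a, br H (P a) = ∑ m, (σ * Λ ^ 2 * eps a m) • B m)
    (hPP : ∀ a b, br (P a) (P b) = (-(σ * eps a b * Λ ^ 2 * c ^ 2)) • J)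
    (hJH : br J H = 0)
    (Bil : V →ₗ[ℝ] V →ₗ[ℝ] ℝ)
    (hsymm : ∀ x y : V, Bil x y = Bil y x)
    (hHJ : Bil H J = -μ)
    (hPBF : ∀ a b, Bil (P a) (B b) = (c ^ 2 * μ) * (if a = b then 1 else 0))
    (hJJ : Bil J J = -χ)
    (hBBF : ∀ a b, Bil (B a) (B b) = (c ^ 2 * τ ^ 2 * χ) * (if a = b then 1 else 0))
    (hHH : Bil H H = -(σ * Λ ^ 2 * τ ^ 2 * χ))
    (hPPF : ∀ a b, Bil (P a) (P b) = (σ * c ^ 2 * Λ ^ 2 * χ) * (if a = b then 1 else 0))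
    (hJBF : ∀ a, Bil J (B a) = 0)
    (hJPF : ∀ a, Bil J (P a) = 0)
    (hHBF : ∀ a, Bil H (B a) = 0)
    (hHPF : ∀ a, Bil H (P a) = 0) :
    (∀ x y z : V, br x (br y z) + br y (br z x) + br z (br x y) = 0) ∧
    (∀ x y z : V, Bil (br z x) y + Bil x (br z y) = 0) ∧
    ((∀ x : V, (∀ y : V, Bil x y = 0) → x = 0) ↔
      (c ≠ 0 ∧ μ ^ 2 - σ * Λ ^ 2 * τ ^ 2 * χ ^ 2 ≠ 0)) := by
  set e : Fin 6 → V := ![J, B 0, B 1, H, P 0, P 1] with he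
  have he0 : e 0 = J := rfl
  have he1 : e 1 = B 0 := rfl
  have he2 : e 2 = B 1 := rfl
  have he3 : e 3 = H := rfl
  have he4 : e 4 = P 0 := rfl
  have he5 : e 5 = P 1 := rfl
  have hxx : ∀ x : V, br x x = 0 := fun x => by
    have h := hbr_anti x x
    have h2 : (2:ℝ) • br x x = 0 := by rw [two_smul]; nth_rewrite 2 [h]; simp
    simpa using (smul_eq_zero.mp h2).resolve_left (by norm_num)
  -- flipped bracket lemmas
  have hBJ : ∀ a, br (B a) J = -(∑ m, eps a m • B m) := fun a => by rw [hbr_anti, hJB]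
  have hPJ : ∀ a, br (P a) J = -(∑ m, eps a m • P m) := fun a => by rw [hbr_anti, hJP]
  have hHB : ∀ a, br H (B a) = -(∑ m, -(eps a m * τ ^ 2) • P m) := fun a => by
    rw [hbr_anti, hBH]
  have hPB : ∀ a b, br (P a) (B b) = -(-(eps b a * c ^ 2) • H) := fun a b => by
    rw [hbr_anti, hBP]
  have hPH : ∀ a, br (P a) H = -(∑ m, (σ * Λ ^ 2 * eps a m) • B m) := fun a => by
    rw [hbr_anti, hHP]
  have hHJ0 : br H J = 0 := by rw [hbr_anti, hJH, neg_zero]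
  -- flipped form lemmas
  have hJHf : Bil J H = -μ := by rw [hsymm]; exact hHJ
  have hBPf : ∀ a b, Bil (B a) (P b) = (c ^ 2 * μ) * (if a = b then 1 else 0) := fun a b => by
    rw [hsymm, hPBF]; by_cases h : a = b <;> simp [h]; exact fun h' => absurd h'.symm h
  have hBJf : ∀ a, Bil (B a) J = 0 := fun a => by rw [hsymm]; exact hJBF a
  have hPJf : ∀ a, Bil (P a) J = 0 := fun a => by rw [hsymm]; exact hJPF a
  have hBHf : ∀ a, Bil (B a) H = 0 := fun a => by rw [hsymm]; exact hHBF a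
  have hPHf : ∀ a, Bil (P a) H = 0 := fun a => by rw [hsymm]; exact hHPF a
  refine ⟨?_, ?_, ?_⟩
  · -- Jacobi identity
    refine tri_ind e hspan
      (fun x y z => br x (br y z) + br y (br z x) + br z (br x y))
      (fun x x' y z => by simp only [map_add, LinearMap.add_apply]; abel)
      (fun a x y z => by
        simp only [map_smul, LinearMap.smul_apply, smul_add])
      (fun x y y' z => by simp only [map_add, LinearMap.add_apply]; abel)
      (fun a x y z => by
        simp only [map_smul, LinearMap.smul_apply, smul_add])
      (fun x y z z' => by simp only [map_add, LinearMap.add_apply]; abel)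
      (fun a x y z => by
        simp only [map_smul, LinearMap.smul_apply, smul_add])
      ?_
    intro i j k
    fin_cases i <;> fin_cases j <;> fin_cases k <;>
      simp only [Fin.reduceFinMk, Fin.zero_eta, Fin.mk_one, he0, he1, he2, he3, he4, he5,
        Fin.isValue, Fin.sum_univ_two, eps, Matrix.cons_val_zero, Matrix.cons_val_one,
        Matrix.head_cons, Matrix.cons_val_fin_one, neg_neg,
        hJB, hJP, hBB, hBH, hBP, hHP, hPP, hJH, hBJ, hPJ, hHB, hPB, hPH, hHJ0, hxx,
        map_add, map_smul, map_neg, map_zero, LinearMap.add_apply, LinearMap.smul_apply,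
        LinearMap.neg_apply, LinearMap.zero_apply, smul_add, smul_neg, smul_smul,
        smul_zero, zero_smul, one_smul, neg_zero, add_zero, zero_add, neg_smul,
        mul_zero, zero_mul, mul_one, one_mul, mul_neg, neg_mul] <;>
      first
        | rfl
        | module
  · -- invariance
    refine tri_ind e hspan
      (fun x y z => Bil (br z x) y + Bil x (br z y))
      (fun x x' y z => by simp only [map_add, LinearMap.add_apply]; abel)
      (fun a x y z => by
        simp only [map_smul, LinearMap.smul_apply, smul_add])
      (fun x y y' z => by simp only [map_add, LinearMap.add_apply]; abel)
      (fun a x y z => by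
        simp only [map_smul, LinearMap.smul_apply, smul_add])
      (fun x y z z' => by simp only [map_add, LinearMap.add_apply]; abel)
      (fun a x y z => by
        simp only [map_smul, LinearMap.smul_apply, smul_add])
      ?_
    intro i j k
    fin_cases i <;> fin_cases j <;> fin_cases k <;>
      simp only [Fin.reduceFinMk, Fin.zero_eta, Fin.mk_one, he0, he1, he2, he3, he4, he5,
        Fin.isValue, Fin.sum_univ_two, eps, Matrix.cons_val_zero, Matrix.cons_val_one,
        Matrix.head_cons, Matrix.cons_val_fin_one, neg_neg,
        hJB, hJP, hBB, hBH, hBP, hHP, hPP, hJH, hBJ, hPJ, hHB, hPB, hPH, hHJ0, hxx,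
        hJHf, hBPf, hBJf, hPJf, hBHf, hPHf, hHJ, hPBF, hJJ, hBBF, hHH, hPPF,
        hJBF, hJPF, hHBF, hHPF,
        map_add, map_smul, map_neg, map_zero, LinearMap.add_apply, LinearMap.smul_apply,
        LinearMap.neg_apply, LinearMap.zero_apply, smul_add, smul_neg, smul_smul,
        smul_zero, zero_smul, one_smul, neg_zero, add_zero, zero_add, neg_smul,
        mul_zero, zero_mul, mul_one, one_mul, mul_neg, neg_mul, smul_eq_mul,
        Fin.zero_eq_one_iff, Fin.one_eq_zero_iff, if_true, if_false, reduceIte,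
        Nat.succ_ne_self, OfNat.ofNat_ne_one] <;>
      ring_nf <;>
      norm_num
  · -- nondegeneracy
    have hli := Fintype.linearIndependent_iff.mp hindep
    constructor
    · intro hnd
      by_contra hcon
      rw [not_and_or] at hcon
      rcases hcon with hc | hd
      · rw [not_ne_iff] at hc
        -- c = 0 : B 0 is in the radical
        have hrad : ∀ y, Bil (B 0) y = 0 := by
          refine span_all e hspan (fun y => Bil (B 0) y = 0) (by simp) ?_ ?_ ?_
          · intro x y hx hy; rw [map_add, hx, hy, add_zero]
          · intro a x hx; rw [map_smul, hx, smul_zero]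
          · intro i
            fin_cases i <;>
              simp [he0, he1, he2, he3, he4, he5, hBJf, hBBF, hBHf, hBPf, hc]
        have hB0 : B 0 = 0 := hnd _ hrad
        have := hli (fun i => if i = 1 then (1:ℝ) else 0)
          (by simp [Fin.sum_univ_six, he0, he1, he2, he3, he4, he5, hB0]) 1
        simp at this
      · rw [not_ne_iff] at hd
        by_cases hμχ : μ = 0 ∧ χ = 0
        · -- J is in the radical
          have hrad : ∀ y, Bil J y = 0 := by
            refine span_all e hspan (fun y => Bil J y = 0) (by simp) ?_ ?_ ?_
            · intro x y hx hy; rw [map_add, hx, hy, add_zero]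
            · intro a x hx; rw [map_smul, hx, smul_zero]
            · intro i
              fin_cases i <;>
                simp [he0, he1, he2, he3, he4, he5, hJJ, hJBF, hJHf, hJPF, hμχ.1, hμχ.2]
          have hJ0 : J = 0 := hnd _ hrad
          have := hli (fun i => if i = 0 then (1:ℝ) else 0)
            (by simp [Fin.sum_univ_six, he0, he1, he2, he3, he4, he5, hJ0]) 0
          simp at this
        · -- (-μ)•J + χ•H is a nonzero radical element
          have hrad : ∀ y, Bil ((-μ) • J + χ • H) y = 0 := by
            refine span_all e hspan _ (by simp) ?_ ?_ ?_
            · intro x y hx hy; rw [map_add, hx, hy, add_zero]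
            · intro a x hx; rw [map_smul, hx, smul_zero]
            · intro i
              fin_cases i <;>
                simp only [Fin.reduceFinMk, Fin.zero_eta, Fin.mk_one,
                  he0, he1, he2, he3, he4, he5, map_add, map_smul,
                  LinearMap.add_apply, LinearMap.smul_apply, smul_eq_mul,
                  hJJ, hJHf, hJBF, hJPF, hHJ, hHH, hHBF, hHPF, mul_zero, neg_zero,
                  add_zero, zero_add, mul_neg] <;>
                first
                  | rfl
                  | ring1
                  | linear_combination hd
          have hx0 : (-μ) • J + χ • H = 0 := hnd _ hrad
          have h0 := hli (fun i => if i = 0 then -μ else if i = 3 then χ else 0)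
            (by
              simp only [Fin.sum_univ_six, he0, he1, he2, he3, he4, he5]
              simpa [neg_smul] using hx0)
          have hμ : μ = 0 := by have := h0 0; simp at this; linarith
          have hχ : χ = 0 := by have := h0 3; simpa using this
          exact hμχ ⟨hμ, hχ⟩
    · rintro ⟨hc, hd⟩ x hx
      set b : Module.Basis (Fin 6) ℝ V := Module.Basis.mk hindep hspan.ge
      have hbe : ∀ i, b i = e i := fun i => by simp [b, Module.Basis.mk_apply, he]
      set f : Fin 6 → ℝ := fun i => b.repr x i with hf
      have hsum : ∑ i, f i • b i = x := b.sum_repr x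
      have hexp : ∀ y, (∑ i, f i * Bil (e i) y) = 0 := by
        intro y
        have h := hx y
        rw [← hsum] at h
        simpa [map_sum, map_smul, smul_eq_mul, hbe] using h
      have E0 := hexp J
      have E3 := hexp H
      have E1 := hexp (B 0)
      have E4 := hexp (P 0)
      have E2 := hexp (B 1)
      have E5 := hexp (P 1)
      simp only [Fin.sum_univ_six, he0, he1, he2, he3, he4, he5, hJJ, hJHf, hJBF, hJPF,
        hHJ, hHH, hHBF, hHPF, hBJf, hBHf, hBBF, hBPf, hPJf, hPHf, hPBF, hPPF,
        if_true, if_false, reduceIte, mul_zero, zero_mul, mul_one, add_zero, zero_add,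
        Fin.zero_eq_one_iff, Fin.one_eq_zero_iff, OfNat.ofNat_ne_one, one_ne_zero,
        Nat.succ_ne_self] at E0 E3 E1 E4 E2 E5
      have hJH03 : f 0 = 0 ∧ f 3 = 0 := by
        apply solve2 (A := -χ) (B := -μ) (C := -(σ * Λ ^ 2 * τ ^ 2 * χ)) (u := f 0) (v := f 3)
        · intro h; apply hd; nlinarith [h]
        · linarith [E0]
        · linarith [E3]
      have hBP14 : f 1 = 0 ∧ f 4 = 0 := by
        apply solve2 (A := c ^ 2 * τ ^ 2 * χ) (B := c ^ 2 * μ) (C := σ * c ^ 2 * Λ ^ 2 * χ)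
          (u := f 1) (v := f 4)
        · intro h; apply hd
          have hc4 : c ^ 4 ≠ 0 := pow_ne_zero 4 hc
          have : c ^ 4 * (μ ^ 2 - σ * Λ ^ 2 * τ ^ 2 * χ ^ 2) = 0 := by nlinarith [h]
          exact (mul_eq_zero.mp this).resolve_left hc4
        · linarith [E1]
        · linarith [E4]
      have hBP25 : f 2 = 0 ∧ f 5 = 0 := by
        apply solve2 (A := c ^ 2 * τ ^ 2 * χ) (B := c ^ 2 * μ) (C := σ * c ^ 2 * Λ ^ 2 * χ)
          (u := f 2) (v := f 5)
        · intro h; apply hd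
          have hc4 : c ^ 4 ≠ 0 := pow_ne_zero 4 hc
          have : c ^ 4 * (μ ^ 2 - σ * Λ ^ 2 * τ ^ 2 * χ ^ 2) = 0 := by nlinarith [h]
          exact (mul_eq_zero.mp this).resolve_left hc4
        · linarith [E2]
        · linarith [E5]
      rw [← hsum, Fin.sum_univ_six, hJH03.1, hJH03.2, hBP14.1, hBP14.2, hBP25.1, hBP25.2]
      simp
end

section
/- Fix a real number Λ and a sign σ ∈ {1, −1}, and let g be the six-dimensional real Lie algebra with basis {J_0, J_1, J_2, P_0, P_1, P_2} and brackets [J_μ,J_ν] = ε_{μν}{}^ρ J_ρ, [J_μ,P_ν] = ε_{μν}{}^ρ P_ρ, [P_μ,P_ν] = σΛ² ε_{μν}{}^ρ J_ρ. Then: (i) for all real μ, χ the symmetric bilinear form given by B(J_ρ,J_λ) = χη_{ρλ}, B(P_ρ,J_λ) = μη_{ρλ}, B(P_ρ,P_λ) = σΛ²χη_{ρλ} is invariant; (ii) every invariant symmetric bilinear form on g is of this form for unique real μ, χ; and (iii) such a form is nondegenerate if and only if μ² − σΛ²χ² ≠ 0. -/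
/-- The 3d Minkowski metric `η = diag(−1,1,1)`. -/
def etaM : Fin 3 → Fin 3 → ℝ := ![![-1, 0, 0], ![0, 1, 0], ![0, 0, 1]]

/-- The totally antisymmetric symbol with `ε 0 1 2 = 1`. -/
def eps3 : Fin 3 → Fin 3 → Fin 3 → ℝ :=
  ![![![0, 0, 0], ![0, 0, 1], ![0, -1, 0]],
    ![![0, 0, -1], ![0, 0, 0], ![1, 0, 0]],
    ![![0, 1, 0], ![-1, 0, 0], ![0, 0, 0]]]

/-- `ε_{μν}{}^ρ = ε_{μνλ} η^{λρ}` (with `η⁻¹ = η`). -/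
def epsU (μ ν ρ : Fin 3) : ℝ := ∑ lam, eps3 μ ν lam * etaM lam ρ


section AdsHelpers

private lemma ads_zero_on_span {g W : Type*} [AddCommGroup g] [Module ℝ g]
    [AddCommGroup W] [Module ℝ W]
    (Jv Pv : Fin 3 → g) (hs : Submodule.span ℝ (Set.range Jv ∪ Set.range Pv) = ⊤)
    (f : g →ₗ[ℝ] W) (hJ : ∀ i, f (Jv i) = 0) (hP : ∀ i, f (Pv i) = 0) : f = 0 := by
  ext z
  have hz : z ∈ Submodule.span ℝ (Set.range Jv ∪ Set.range Pv) := by rw [hs]; trivial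
  induction hz using Submodule.span_induction with
  | mem v hv => rcases hv with ⟨i, rfl⟩ | ⟨i, rfl⟩ <;> simp [hJ, hP]
  | zero => simp
  | add x y _ _ hx hy => simp [hx, hy]
  | smul c x _ hx => simp [hx]

private lemma ads_etaM_symm (i j : Fin 3) : etaM i j = etaM j i := by
  fin_cases i <;> fin_cases j <;> norm_num [etaM, Matrix.cons_val_two, Matrix.vecHead, Matrix.vecTail]

private lemma ads_Hkey (c : ℝ) (i j k : Fin 3) :
    (∑ ρ, epsU i j ρ * (c * etaM ρ k)) + (∑ ρ, epsU i k ρ * (c * etaM j ρ)) = 0 := by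
  fin_cases i <;> fin_cases j <;> fin_cases k <;>
    norm_num [epsU, eps3, etaM, Fin.sum_univ_three, Matrix.cons_val_two, Matrix.vecHead, Matrix.vecTail]

private lemma ads_Hkey2 (c : ℝ) (i j k : Fin 3) :
    (∑ ρ, epsU j i ρ * (c * etaM ρ k)) + (∑ ρ, epsU k i ρ * (c * etaM j ρ)) = 0 := by
  fin_cases i <;> fin_cases j <;> fin_cases k <;>
    norm_num [epsU, eps3, etaM, Fin.sum_univ_three, Matrix.cons_val_two, Matrix.vecHead, Matrix.vecTail]

private lemma ads_Hkey3 (c d : ℝ) (i j k : Fin 3) :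
    -(∑ ρ, epsU j i ρ * (d * c * etaM ρ k)) + (∑ ρ, d * epsU i k ρ * (c * etaM j ρ)) = 0 := by
  fin_cases i <;> fin_cases j <;> fin_cases k <;>
    norm_num [epsU, eps3, etaM, Fin.sum_univ_three, Matrix.cons_val_two, Matrix.vecHead, Matrix.vecTail] <;> ring

private lemma ads_Hkey4 (c d : ℝ) (i j k : Fin 3) :
    (∑ ρ, d * epsU i j ρ * (c * etaM ρ k)) + -(∑ ρ, epsU k i ρ * (d * c * etaM j ρ)) = 0 := by
  fin_cases i <;> fin_cases j <;> fin_cases k <;>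
    norm_num [epsU, eps3, etaM, Fin.sum_univ_three, Matrix.cons_val_two, Matrix.vecHead, Matrix.vecTail] <;> ring

private lemma ads_Hkey5 (c d : ℝ) (i j k : Fin 3) :
    (∑ ρ, d * epsU i j ρ * (c * etaM ρ k)) + (∑ ρ, d * epsU i k ρ * (c * etaM j ρ)) = 0 := by
  fin_cases i <;> fin_cases j <;> fin_cases k <;>
    norm_num [epsU, eps3, etaM, Fin.sum_univ_three, Matrix.cons_val_two, Matrix.vecHead, Matrix.vecTail] <;> ring

private lemma ads_rot_aux (f : Fin 3 → Fin 3 → ℝ)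
    (H : ∀ μ ν lam, (∑ ρ, epsU μ ν ρ * f ρ lam) + (∑ ρ, epsU μ lam ρ * f ν ρ) = 0) :
    ∀ i j, f i j = f 1 1 * etaM i j := by
  have e1 := H 0 1 0
  have e2 := H 0 2 0
  have e3 := H 1 0 1
  have e4 := H 1 2 1
  have e5 := H 2 0 2
  have e6 := H 2 1 2
  have e7 := H 0 1 2
  have e8 := H 1 2 0
  norm_num [epsU, eps3, etaM, Fin.sum_univ_three, Matrix.cons_val_two, Matrix.vecHead, Matrix.vecTail]
    at e1 e2 e3 e4 e5 e6 e7 e8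
  intro i j
  fin_cases i <;> fin_cases j <;>
    norm_num [etaM, Matrix.cons_val_two, Matrix.vecHead, Matrix.vecTail]
  all_goals first
    | exact e1 | exact e2 | exact e3 | exact e4 | exact e5 | exact e6
    | exact (show f 0 0 = -f 1 1 by linarith) | exact (show f 2 2 = f 1 1 by linarith)

end AdsHelpers

set_option maxHeartbeats 1000000 in
/-- For the three-dimensional (A)dS algebra with brackets
`[J_μ,J_ν] = ε_{μν}{}^ρ J_ρ`, `[J_μ,P_ν] = ε_{μν}{}^ρ P_ρ`, `[P_μ,P_ν] = σΛ²ε_{μν}{}^ρ J_ρ`: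
(i) for all `μ, χ` the indicated symmetric bilinear form is invariant; (ii) every invariant
symmetric bilinear form is of this shape for unique `(μ,χ)`; and (iii) such a form is
nondegenerate iff `μ² − σΛ²χ² ≠ 0`. -/
theorem ads_invariant_metric_classification
    (Λ σ : ℝ) (hσ : σ = 1 ∨ σ = -1)
    (g : Type*) [LieRing g] [LieAlgebra ℝ g]
    (Jv Pv : Fin 3 → g)
    (hindep : LinearIndependent ℝ ![Jv 0, Jv 1, Jv 2, Pv 0, Pv 1, Pv 2])
    (hspan : Submodule.span ℝ (Set.range ![Jv 0, Jv 1, Jv 2, Pv 0, Pv 1, Pv 2]) = ⊤)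
    (hJJ : ∀ μ ν, ⁅Jv μ, Jv ν⁆ = ∑ ρ, epsU μ ν ρ • Jv ρ)
    (hJP : ∀ μ ν, ⁅Jv μ, Pv ν⁆ = ∑ ρ, epsU μ ν ρ • Pv ρ)
    (hPP : ∀ μ ν, ⁅Pv μ, Pv ν⁆ = ∑ ρ, (σ * Λ ^ 2 * epsU μ ν ρ) • Jv ρ) :
    -- (i) existence and invariance
    (∀ mu chi : ℝ, ∃ Bil : g →ₗ[ℝ] g →ₗ[ℝ] ℝ,
        (∀ x y : g, Bil x y = Bil y x) ∧
        (∀ ρ lam, Bil (Jv ρ) (Jv lam) = chi * etaM ρ lam) ∧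
        (∀ ρ lam, Bil (Pv ρ) (Jv lam) = mu * etaM ρ lam) ∧
        (∀ ρ lam, Bil (Pv ρ) (Pv lam) = σ * Λ ^ 2 * chi * etaM ρ lam) ∧
        (∀ x y z : g, Bil ⁅z, x⁆ y + Bil x ⁅z, y⁆ = 0)) ∧
    -- (ii) every invariant symmetric form is of this shape, for unique (μ,χ)
    (∀ Bil : g →ₗ[ℝ] g →ₗ[ℝ] ℝ,
        (∀ x y : g, Bil x y = Bil y x) →
        (∀ x y z : g, Bil ⁅z, x⁆ y + Bil x ⁅z, y⁆ = 0) →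
        ∃! mc : ℝ × ℝ,
          (∀ ρ lam, Bil (Jv ρ) (Jv lam) = mc.2 * etaM ρ lam) ∧
          (∀ ρ lam, Bil (Pv ρ) (Jv lam) = mc.1 * etaM ρ lam) ∧
          (∀ ρ lam, Bil (Pv ρ) (Pv lam) = σ * Λ ^ 2 * mc.2 * etaM ρ lam)) ∧
    -- (iii) nondegeneracy criterion
    (∀ (mu chi : ℝ) (Bil : g →ₗ[ℝ] g →ₗ[ℝ] ℝ),
        (∀ x y : g, Bil x y = Bil y x) →
        (∀ x y z : g, Bil ⁅z, x⁆ y + Bil x ⁅z, y⁆ = 0) →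
        (∀ ρ lam, Bil (Jv ρ) (Jv lam) = chi * etaM ρ lam) →
        (∀ ρ lam, Bil (Pv ρ) (Jv lam) = mu * etaM ρ lam) →
        (∀ ρ lam, Bil (Pv ρ) (Pv lam) = σ * Λ ^ 2 * chi * etaM ρ lam) →
        ((∀ x : g, (∀ y : g, Bil x y = 0) → x = 0) ↔ mu ^ 2 - σ * Λ ^ 2 * chi ^ 2 ≠ 0)) := by
  have hs' : Submodule.span ℝ (Set.range Jv ∪ Set.range Pv) = ⊤ := by
    apply top_unique
    rw [← hspan]
    apply Submodule.span_mono
    rintro v ⟨i, rfl⟩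
    fin_cases i
    · exact Or.inl ⟨0, rfl⟩
    · exact Or.inl ⟨1, rfl⟩
    · exact Or.inl ⟨2, rfl⟩
    · exact Or.inr ⟨0, rfl⟩
    · exact Or.inr ⟨1, rfl⟩
    · exact Or.inr ⟨2, rfl⟩
  refine ⟨?_, ?_, ?_⟩
  · -- Part (i)
    intro mu chi
    let b : Module.Basis (Fin 6) ℝ g := Module.Basis.mk hindep (by rw [hspan])
    have hb : ∀ i, b i = ![Jv 0, Jv 1, Jv 2, Pv 0, Pv 1, Pv 2] i := fun i =>
      congrFun (Module.Basis.coe_mk _ _) i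
    set M : Fin 6 → Fin 6 → ℝ :=
      ![![-chi, 0, 0, -mu, 0, 0], ![0, chi, 0, 0, mu, 0], ![0, 0, chi, 0, 0, mu],
        ![-mu, 0, 0, -(σ*Λ^2*chi), 0, 0], ![0, mu, 0, 0, σ*Λ^2*chi, 0],
        ![0, 0, mu, 0, 0, σ*Λ^2*chi]] with hM
    set Bil : g →ₗ[ℝ] g →ₗ[ℝ] ℝ := b.constr ℝ (fun i => (b.constr ℝ (M i))) with hBil
    have hBval : ∀ i j, Bil (b i) (b j) = M i j := fun i j => by
      simp [hBil, Module.Basis.constr_basis]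
    have hJb : ∀ ρ : Fin 3, Jv ρ = b (⟨ρ, by omega⟩ : Fin 6) := fun ρ => by
      fin_cases ρ <;> rw [hb] <;> rfl
    have hPb : ∀ ρ : Fin 3, Pv ρ = b (⟨(ρ : ℕ) + 3, by omega⟩ : Fin 6) := fun ρ => by
      fin_cases ρ <;> rw [hb] <;> rfl
    have BJJ : ∀ ρ lam, Bil (Jv ρ) (Jv lam) = chi * etaM ρ lam := fun ρ lam => by
      rw [hJb, hJb, hBval]
      fin_cases ρ <;> fin_cases lam <;> norm_num [hM, etaM]
    have BPJ : ∀ ρ lam, Bil (Pv ρ) (Jv lam) = mu * etaM ρ lam := fun ρ lam => by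
      rw [hJb, hPb, hBval]
      fin_cases ρ <;> fin_cases lam <;> norm_num [hM, etaM]
    have BJP : ∀ ρ lam, Bil (Jv ρ) (Pv lam) = mu * etaM ρ lam := fun ρ lam => by
      rw [hJb, hPb, hBval]
      fin_cases ρ <;> fin_cases lam <;> norm_num [hM, etaM]
    have BPP : ∀ ρ lam, Bil (Pv ρ) (Pv lam) = σ * Λ ^ 2 * chi * etaM ρ lam := fun ρ lam => by
      rw [hPb, hPb, hBval]
      fin_cases ρ <;> fin_cases lam <;> norm_num [hM, etaM] <;> ring
    have hsymB : ∀ x y : g, Bil x y = Bil y x := by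
      have heq : Bil.flip = Bil := by
        apply b.ext; intro i; apply b.ext; intro j
        rw [LinearMap.flip_apply, hBval, hBval]
        fin_cases i <;> fin_cases j <;> norm_num [hM]
      intro x y
      have h1 : Bil.flip x y = Bil x y := by rw [heq]
      rw [LinearMap.flip_apply] at h1
      exact h1.symm
    have kJJJ : ∀ i j k, Bil ⁅Jv i, Jv j⁆ (Jv k) + Bil (Jv j) ⁅Jv i, Jv k⁆ = 0 := by
      intro i j k
      rw [hJJ, hJJ, map_sum, LinearMap.sum_apply, map_sum]
      simp only [map_smul, LinearMap.smul_apply, smul_eq_mul, BJJ]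
      exact ads_Hkey chi i j k
    have kJJP : ∀ i j k, Bil ⁅Jv i, Jv j⁆ (Pv k) + Bil (Jv j) ⁅Jv i, Pv k⁆ = 0 := by
      intro i j k
      rw [hJJ, hJP, map_sum, LinearMap.sum_apply, map_sum]
      simp only [map_smul, LinearMap.smul_apply, smul_eq_mul, BJP]
      exact ads_Hkey mu i j k
    have kJPJ : ∀ i j k, Bil ⁅Jv i, Pv j⁆ (Jv k) + Bil (Pv j) ⁅Jv i, Jv k⁆ = 0 := by
      intro i j k
      rw [hJP, hJJ, map_sum, LinearMap.sum_apply, map_sum]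
      simp only [map_smul, LinearMap.smul_apply, smul_eq_mul, BPJ]
      exact ads_Hkey mu i j k
    have kJPP : ∀ i j k, Bil ⁅Jv i, Pv j⁆ (Pv k) + Bil (Pv j) ⁅Jv i, Pv k⁆ = 0 := by
      intro i j k
      rw [hJP, hJP, map_sum, LinearMap.sum_apply, map_sum]
      simp only [map_smul, LinearMap.smul_apply, smul_eq_mul, BPP]
      exact ads_Hkey (σ * Λ ^ 2 * chi) i j k
    have kPJJ : ∀ i j k, Bil ⁅Pv i, Jv j⁆ (Jv k) + Bil (Jv j) ⁅Pv i, Jv k⁆ = 0 := by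
      intro i j k
      rw [← lie_skew (Pv i) (Jv j), ← lie_skew (Pv i) (Jv k), hJP, hJP]
      simp only [map_neg, map_sum, map_smul, LinearMap.neg_apply, LinearMap.sum_apply,
        LinearMap.smul_apply, smul_eq_mul, BPJ, BJP]
      rw [← neg_add, neg_eq_zero]
      exact ads_Hkey2 mu i j k
    have kPJP : ∀ i j k, Bil ⁅Pv i, Jv j⁆ (Pv k) + Bil (Jv j) ⁅Pv i, Pv k⁆ = 0 := by
      intro i j k
      rw [← lie_skew (Pv i) (Jv j), hJP, hPP]
      simp only [map_neg, map_sum, map_smul, LinearMap.neg_apply, LinearMap.sum_apply,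
        LinearMap.smul_apply, smul_eq_mul, BPP, BJJ]
      exact ads_Hkey3 chi (σ * Λ ^ 2) i j k
    have kPPJ : ∀ i j k, Bil ⁅Pv i, Pv j⁆ (Jv k) + Bil (Pv j) ⁅Pv i, Jv k⁆ = 0 := by
      intro i j k
      rw [hPP, ← lie_skew (Pv i) (Jv k), hJP]
      simp only [map_neg, map_sum, map_smul, LinearMap.neg_apply, LinearMap.sum_apply,
        LinearMap.smul_apply, smul_eq_mul, BJJ, BPP]
      exact ads_Hkey4 chi (σ * Λ ^ 2) i j k
    have kPPP : ∀ i j k, Bil ⁅Pv i, Pv j⁆ (Pv k) + Bil (Pv j) ⁅Pv i, Pv k⁆ = 0 := by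
      intro i j k
      rw [hPP, hPP]
      simp only [map_sum, map_smul, LinearMap.sum_apply,
        LinearMap.smul_apply, smul_eq_mul, BJP, BPJ]
      exact ads_Hkey5 mu (σ * Λ ^ 2) i j k
    letI : LieRing (Module.End ℝ g) := LieRing.ofAssociativeRing
    letI : LieAlgebra ℝ (Module.End ℝ g) := LieAlgebra.ofAssociativeAlgebra
    let adL : g →ₗ[ℝ] (g →ₗ[ℝ] g) := (LieAlgebra.ad ℝ g).toLinearMap
    let F : g →ₗ[ℝ] g →ₗ[ℝ] g →ₗ[ℝ] ℝ :=
      (LinearMap.llcomp ℝ g g (g →ₗ[ℝ] ℝ) Bil) ∘ₗ adL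
      + LinearMap.lflip.toLinearMap ∘ₗ ((LinearMap.llcomp ℝ g g (g →ₗ[ℝ] ℝ) Bil.flip) ∘ₗ adL)
    have hFapp : ∀ z x y : g, F z x y = Bil ⁅z, x⁆ y + Bil x ⁅z, y⁆ := by
      intro z x y
      simp [F, adL, LinearMap.llcomp_apply, LinearMap.lflip_apply, LieAlgebra.ad_apply]
    have hF0 : F = 0 :=
      ads_zero_on_span (W := g →ₗ[ℝ] g →ₗ[ℝ] ℝ) Jv Pv hs' F
        (fun i => ads_zero_on_span Jv Pv hs' (F (Jv i))
          (fun j => ads_zero_on_span Jv Pv hs' (F (Jv i) (Jv j))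
            (fun k => by rw [hFapp]; exact kJJJ i j k)
            (fun k => by rw [hFapp]; exact kJJP i j k))
          (fun j => ads_zero_on_span Jv Pv hs' (F (Jv i) (Pv j))
            (fun k => by rw [hFapp]; exact kJPJ i j k)
            (fun k => by rw [hFapp]; exact kJPP i j k)))
        (fun i => ads_zero_on_span Jv Pv hs' (F (Pv i))
          (fun j => ads_zero_on_span Jv Pv hs' (F (Pv i) (Jv j))
            (fun k => by rw [hFapp]; exact kPJJ i j k)
            (fun k => by rw [hFapp]; exact kPJP i j k))
          (fun j => ads_zero_on_span Jv Pv hs' (F (Pv i) (Pv j))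
            (fun k => by rw [hFapp]; exact kPPJ i j k)
            (fun k => by rw [hFapp]; exact kPPP i j k)))
    have hinvB : ∀ x y z : g, Bil ⁅z, x⁆ y + Bil x ⁅z, y⁆ = 0 := by
      intro x y z
      rw [← hFapp, hF0]
      rfl
    exact ⟨Bil, hsymB, BJJ, BPJ, BPP, hinvB⟩
  · -- Part (ii)
    intro Bil hsym hinv
    have hA : ∀ i j, Bil (Jv i) (Jv j) = Bil (Jv 1) (Jv 1) * etaM i j := by
      apply ads_rot_aux (fun i j => Bil (Jv i) (Jv j))
      intro μ ν lam
      have h := hinv (Jv ν) (Jv lam) (Jv μ)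
      rw [hJJ, hJJ] at h
      simpa only [map_sum, map_smul, LinearMap.sum_apply, LinearMap.smul_apply,
        smul_eq_mul] using h
    have hD : ∀ i j, Bil (Pv i) (Jv j) = Bil (Pv 1) (Jv 1) * etaM i j := by
      apply ads_rot_aux (fun i j => Bil (Pv i) (Jv j))
      intro μ ν lam
      have h := hinv (Pv ν) (Jv lam) (Jv μ)
      rw [hJP, hJJ] at h
      simpa only [map_sum, map_smul, LinearMap.sum_apply, LinearMap.smul_apply,
        smul_eq_mul] using h
    have hE : ∀ i j, Bil (Pv i) (Pv j) = Bil (Pv 1) (Pv 1) * etaM i j := by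
      apply ads_rot_aux (fun i j => Bil (Pv i) (Pv j))
      intro μ ν lam
      have h := hinv (Pv ν) (Pv lam) (Jv μ)
      rw [hJP, hJP] at h
      simpa only [map_sum, map_smul, LinearMap.sum_apply, LinearMap.smul_apply,
        smul_eq_mul] using h
    have hlink : Bil (Pv 1) (Pv 1) = σ * Λ ^ 2 * Bil (Jv 1) (Jv 1) := by
      have h := hinv (Pv 1) (Jv 2) (Pv 0)
      rw [hPP, ← lie_skew (Pv 0) (Jv 2), hJP] at h
      simp only [Fin.sum_univ_three, map_neg, map_add, map_smul, LinearMap.neg_apply,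
        LinearMap.add_apply, LinearMap.smul_apply, smul_eq_mul] at h
      rw [hA 2 2] at h
      rw [hE 1 0, hE 1 1, hE 1 2] at h
      norm_num [epsU, eps3, etaM, Fin.sum_univ_three, Matrix.cons_val_two, Matrix.vecHead, Matrix.vecTail] at h
      linarith
    refine ⟨(Bil (Pv 1) (Jv 1), Bil (Jv 1) (Jv 1)), ⟨fun ρ lam => hA ρ lam,
      fun ρ lam => hD ρ lam, fun ρ lam => by rw [hE, hlink]⟩, ?_⟩
    rintro ⟨m, c⟩ ⟨h1, h2, h3⟩
    have hc := h1 1 1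
    have hm := h2 1 1
    norm_num [etaM, Matrix.vecHead, Matrix.vecTail] at hc hm
    simp [hc, hm]
  · -- Part (iii)
    intro mu chi Bil hsym hinv BJJ BPJ BPP
    have BJP : ∀ ρ lam, Bil (Jv ρ) (Pv lam) = mu * etaM ρ lam := fun ρ lam => by
      rw [hsym, BPJ, ads_etaM_symm]
    constructor
    · intro hnd
      intro hdeg
      by_cases hmc : mu = 0 ∧ chi = 0
      · have hz : Bil (Jv 1) = 0 := by
          apply ads_zero_on_span Jv Pv hs'
          · intro i; rw [BJJ, hmc.2]; ring
          · intro i; rw [BJP, hmc.1]; ring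
        have h0 : Jv 1 = 0 := hnd (Jv 1) (fun y => by rw [hz]; rfl)
        have hne1 : (![Jv 0, Jv 1, Jv 2, Pv 0, Pv 1, Pv 2] : Fin 6 → g) 1 ≠ 0 :=
          hindep.ne_zero 1
        exact hne1 h0
      · set x : g := mu • Jv 1 - chi • Pv 1 with hxdef
        have hz : Bil x = 0 := by
          apply ads_zero_on_span Jv Pv hs'
          · intro i
            rw [hxdef]
            simp only [map_sub, map_smul, LinearMap.sub_apply, LinearMap.smul_apply,
              smul_eq_mul, BJJ, BPJ]
            ring
          · intro i
            rw [hxdef]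
            simp only [map_sub, map_smul, LinearMap.sub_apply, LinearMap.smul_apply,
              smul_eq_mul, BJP, BPP]
            rw [ads_etaM_symm 1 i]
            linear_combination etaM i 1 * hdeg
        have hx0 : x = 0 := hnd x (fun y => by rw [hz]; rfl)
        have hcoef := Fintype.linearIndependent_iff.mp hindep ![0, mu, 0, 0, -chi, 0] ?_
        · exact hmc ⟨by simpa using hcoef 1,
            by simpa using neg_eq_zero.mp (by simpa using hcoef 4)⟩
        · rw [Fin.sum_univ_six]
          simp only [Matrix.cons_val_zero, Matrix.cons_val_one, Matrix.head_cons]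
          rw [show (![0, mu, 0, 0, -chi, 0] : Fin 6 → ℝ) 2 = 0 from rfl]
          rw [show (![0, mu, 0, 0, -chi, 0] : Fin 6 → ℝ) 3 = 0 from rfl]
          rw [show (![0, mu, 0, 0, -chi, 0] : Fin 6 → ℝ) 4 = -chi from rfl]
          rw [show (![0, mu, 0, 0, -chi, 0] : Fin 6 → ℝ) 5 = 0 from rfl]
          rw [show (![Jv 0, Jv 1, Jv 2, Pv 0, Pv 1, Pv 2] : Fin 6 → g) 2 = Jv 2 from rfl]
          rw [show (![Jv 0, Jv 1, Jv 2, Pv 0, Pv 1, Pv 2] : Fin 6 → g) 3 = Pv 0 from rfl]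
          rw [show (![Jv 0, Jv 1, Jv 2, Pv 0, Pv 1, Pv 2] : Fin 6 → g) 4 = Pv 1 from rfl]
          rw [show (![Jv 0, Jv 1, Jv 2, Pv 0, Pv 1, Pv 2] : Fin 6 → g) 5 = Pv 2 from rfl]
          rw [← hx0, hxdef]
          module
    · intro hne x hx
      let b : Module.Basis (Fin 6) ℝ g := Module.Basis.mk hindep (by rw [hspan])
      have hb : ∀ i, b i = ![Jv 0, Jv 1, Jv 2, Pv 0, Pv 1, Pv 2] i := fun i =>
        congrFun (Module.Basis.coe_mk _ _) i
      set c : Fin 6 → ℝ := fun i => b.repr x i with hcdef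
      have hexp : ∀ y, (∑ i, c i * Bil (b i) y) = 0 := fun y => by
        have h1 : Bil x y = 0 := hx y
        calc ∑ i, c i * Bil (b i) y = Bil (∑ i, c i • b i) y := by
              simp [map_sum, LinearMap.sum_apply, map_smul]
          _ = Bil x y := by rw [b.sum_repr x]
          _ = 0 := h1
      have hJ0 := hexp (Jv 0)
      have hJ1 := hexp (Jv 1)
      have hJ2 := hexp (Jv 2)
      have hP0 := hexp (Pv 0)
      have hP1 := hexp (Pv 1)
      have hP2 := hexp (Pv 2)
      rw [Fin.sum_univ_six] at hJ0 hJ1 hJ2 hP0 hP1 hP2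
      have h5g : (![Jv 0, Jv 1, Jv 2, Pv 0, Pv 1, Pv 2] : Fin 6 → g) 5 = Pv 2 := rfl
      simp only [hb, h5g, Matrix.cons_val_zero, Matrix.cons_val_one, Matrix.head_cons,
        Matrix.cons_val_two, Matrix.cons_val_three, Matrix.cons_val_four, Matrix.tail_cons,
        BJJ, BPJ, BJP, BPP] at hJ0 hJ1 hJ2 hP0 hP1 hP2
      norm_num [etaM, Matrix.cons_val_two, Matrix.vecHead, Matrix.vecTail] at hJ0 hJ1 hJ2 hP0 hP1 hP2
      have k0 : (mu ^ 2 - σ * Λ ^ 2 * chi ^ 2) * c 0 = 0 := by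
        linear_combination σ * Λ ^ 2 * chi * hJ0 - mu * hP0
      have k3 : (mu ^ 2 - σ * Λ ^ 2 * chi ^ 2) * c 3 = 0 := by
        linear_combination chi * hP0 - mu * hJ0
      have k1 : (mu ^ 2 - σ * Λ ^ 2 * chi ^ 2) * c 1 = 0 := by
        linear_combination mu * hP1 - σ * Λ ^ 2 * chi * hJ1
      have k4 : (mu ^ 2 - σ * Λ ^ 2 * chi ^ 2) * c 4 = 0 := by
        linear_combination mu * hJ1 - chi * hP1
      have k2 : (mu ^ 2 - σ * Λ ^ 2 * chi ^ 2) * c 2 = 0 := by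
        linear_combination mu * hP2 - σ * Λ ^ 2 * chi * hJ2
      have k5 : (mu ^ 2 - σ * Λ ^ 2 * chi ^ 2) * c 5 = 0 := by
        linear_combination mu * hJ2 - chi * hP2
      have hc : ∀ i, c i = 0 := by
        intro i
        fin_cases i
        · exact (mul_eq_zero.mp k0).resolve_left hne
        · exact (mul_eq_zero.mp k1).resolve_left hne
        · exact (mul_eq_zero.mp k2).resolve_left hne
        · exact (mul_eq_zero.mp k3).resolve_left hne
        · exact (mul_eq_zero.mp k4).resolve_left hne
        · exact (mul_eq_zero.mp k5).resolve_left hne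
      have hrepr : b.repr x = 0 := Finsupp.ext hc
      exact (LinearEquiv.map_eq_zero_iff b.repr).mp hrepr
end

section
/- The eight-dimensional real vector space with basis {J, B_1, B_2, H, P_1, P_2, M, S} and brackets [J,B_a] = ε_{am}B_m, [J,P_a] = ε_{am}P_m, [B_a,H] = −ε_{am}P_m, [B_a,B_b] = ε_{ab}S, [B_a,P_b] = ε_{ab}M, with M and S central and all other brackets zero (the extended Bargmann algebra), is a Lie algebra; for all real parameters μ, χ, χ_H, μ_S, μ_{MS} the symmetric bilinear form determined by B(H,J) = −μ, B(J,J) = −χ, B(H,H) = χ_H, B(P_a,B_b) = μ_{MS}δ_{ab}, B(B_a,B_b) = μ_Sδ_{ab}, B(J,M) = μ_{MS}, B(J,S) = μ_S, B(H,S) = μ_{MS}, with all other basis pairings zero, is invariant; and this form is nondegenerate if and only if μ_{MS} ≠ 0. -/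
set_option maxHeartbeats 4000000 in
/-- The extended Bargmann algebra (2+1 dimensions, central charges `M`, `S`):
its bracket satisfies the Jacobi identity; the indicated symmetric bilinear form is invariant
for all parameters `μ, χ, χ_H, μ_S, μ_{MS}`; and it is nondegenerate iff `μ_{MS} ≠ 0`. -/
theorem extended_bargmann_CS
    (μ χ χH μS μMS : ℝ)
    (V : Type*) [AddCommGroup V] [Module ℝ V]
    (J H M S : V) (B P : Fin 2 → V)
    (hindep : LinearIndependent ℝ ![J, B 0, B 1, H, P 0, P 1, M, S])
    (hspan : Submodule.span ℝ (Set.range ![J, B 0, B 1, H, P 0, P 1, M, S]) = ⊤)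
    (br : V →ₗ[ℝ] V →ₗ[ℝ] V)
    (hbr_anti : ∀ x y : V, br x y = - br y x)
    (hJB : ∀ a, br J (B a) = ∑ m, eps a m • B m)
    (hJP : ∀ a, br J (P a) = ∑ m, eps a m • P m)
    (hBH : ∀ a, br (B a) H = ∑ m, (-(eps a m)) • P m)
    (hBB : ∀ a b, br (B a) (B b) = eps a b • S)
    (hBP : ∀ a b, br (B a) (P b) = eps a b • M)
    (hMcentral : ∀ x : V, br M x = 0)
    (hScentral : ∀ x : V, br S x = 0)
    (hJH : br J H = 0)
    (hHP : ∀ a, br H (P a) = 0)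
    (hPP : ∀ a b, br (P a) (P b) = 0)
    (Bil : V →ₗ[ℝ] V →ₗ[ℝ] ℝ)
    (hsymm : ∀ x y : V, Bil x y = Bil y x)
    (hHJ : Bil H J = -μ)
    (hJJ : Bil J J = -χ)
    (hHH : Bil H H = χH)
    (hPB : ∀ a b, Bil (P a) (B b) = μMS * (if a = b then 1 else 0))
    (hBBF : ∀ a b, Bil (B a) (B b) = μS * (if a = b then 1 else 0))
    (hJM : Bil J M = μMS)
    (hJS : Bil J S = μS)
    (hHS : Bil H S = μMS)
    (hJBF : ∀ a, Bil J (B a) = 0)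
    (hJPF : ∀ a, Bil J (P a) = 0)
    (hHBF : ∀ a, Bil H (B a) = 0)
    (hHPF : ∀ a, Bil H (P a) = 0)
    (hHM : Bil H M = 0)
    (hPPF : ∀ a b, Bil (P a) (P b) = 0)
    (hPM : ∀ a, Bil (P a) M = 0)
    (hPS : ∀ a, Bil (P a) S = 0)
    (hBM : ∀ a, Bil (B a) M = 0)
    (hBS : ∀ a, Bil (B a) S = 0)
    (hMM : Bil M M = 0)
    (hMS : Bil M S = 0)
    (hSS : Bil S S = 0) :
    (∀ x y z : V, br x (br y z) + br y (br z x) + br z (br x y) = 0) ∧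
    (∀ x y z : V, Bil (br z x) y + Bil x (br z y) = 0) ∧
    ((∀ x : V, (∀ y : V, Bil x y = 0) → x = 0) ↔ μMS ≠ 0) := by
  have red : ∀ (p : V → Prop), p 0 → (∀ a b, p a → p b → p (a+b)) →
      (∀ (c:ℝ) a, p a → p (c • a)) → (∀ i, p (![J, B 0, B 1, H, P 0, P 1, M, S] i)) →
      ∀ x, p x := by
    intro p h0 hadd hsmul hb x
    have hx : x ∈ (⊤ : Submodule ℝ V) := trivial
    rw [← hspan] at hx
    refine Submodule.span_induction ?_ h0 (fun a b _ _ => hadd a b) (fun c a _ => hsmul c a) hx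
    rintro _ ⟨i, rfl⟩; exact hb i
  have hmem : ∀ i : Fin 8, ![J, B 0, B 1, H, P 0, P 1, M, S] i = J ∨
      ![J, B 0, B 1, H, P 0, P 1, M, S] i = B 0 ∨ ![J, B 0, B 1, H, P 0, P 1, M, S] i = B 1 ∨
      ![J, B 0, B 1, H, P 0, P 1, M, S] i = H ∨ ![J, B 0, B 1, H, P 0, P 1, M, S] i = P 0 ∨
      ![J, B 0, B 1, H, P 0, P 1, M, S] i = P 1 ∨ ![J, B 0, B 1, H, P 0, P 1, M, S] i = M ∨
      ![J, B 0, B 1, H, P 0, P 1, M, S] i = S := by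
    intro i; fin_cases i
    · exact Or.inl rfl
    · exact Or.inr (Or.inl rfl)
    · exact Or.inr (Or.inr (Or.inl rfl))
    · exact Or.inr (Or.inr (Or.inr (Or.inl rfl)))
    · exact Or.inr (Or.inr (Or.inr (Or.inr (Or.inl rfl))))
    · exact Or.inr (Or.inr (Or.inr (Or.inr (Or.inr (Or.inl rfl)))))
    · exact Or.inr (Or.inr (Or.inr (Or.inr (Or.inr (Or.inr (Or.inl rfl))))))
    · exact Or.inr (Or.inr (Or.inr (Or.inr (Or.inr (Or.inr (Or.inr rfl))))))
  have e00 : eps 0 0 = 0 := by simp [eps]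
  have e01 : eps 0 1 = 1 := by simp [eps]
  have e10 : eps 1 0 = -1 := by simp [eps]
  have e11 : eps 1 1 = 0 := by simp [eps]
  have hxx : ∀ x : V, br x x = 0 := by
    intro x
    have h := hbr_anti x x
    have h2 : (2:ℝ) • br x x = 0 := by
      rw [two_smul]; nth_rewrite 2 [h]; simp
    simpa using (smul_eq_zero.mp h2).resolve_left (by norm_num)
  have hxM : ∀ x : V, br x M = 0 := fun x => by rw [hbr_anti, hMcentral, neg_zero]
  have hxS : ∀ x : V, br x S = 0 := fun x => by rw [hbr_anti, hScentral, neg_zero]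
  have hHJ0 : br H J = 0 := by rw [hbr_anti, hJH, neg_zero]
  have hBJ : ∀ a, br (B a) J = ∑ m, (-(eps a m)) • B m := by
    intro a; rw [hbr_anti, hJB]; rw [← Finset.sum_neg_distrib]
    exact Finset.sum_congr rfl fun m _ => by rw [neg_smul]
  have hPJ : ∀ a, br (P a) J = ∑ m, (-(eps a m)) • P m := by
    intro a; rw [hbr_anti, hJP]; rw [← Finset.sum_neg_distrib]
    exact Finset.sum_congr rfl fun m _ => by rw [neg_smul]
  have hHB : ∀ a, br H (B a) = ∑ m, eps a m • P m := by
    intro a; rw [hbr_anti, hBH]; rw [← Finset.sum_neg_distrib]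
    exact Finset.sum_congr rfl fun m _ => by rw [neg_smul, neg_neg]
  have hPH : ∀ a, br (P a) H = 0 := fun a => by rw [hbr_anti, hHP, neg_zero]
  have hPBbr : ∀ a b, br (P a) (B b) = (-(eps b a)) • M := by
    intro a b; rw [hbr_anti, hBP, neg_smul]
  -- Bil table (derived flips and concrete values)
  have pb00 : Bil (P 0) (B 0) = μMS := by simpa using hPB 0 0
  have pb01 : Bil (P 0) (B 1) = 0 := by simpa using hPB 0 1
  have pb10 : Bil (P 1) (B 0) = 0 := by simpa using hPB 1 0
  have pb11 : Bil (P 1) (B 1) = μMS := by simpa using hPB 1 1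
  have bb00 : Bil (B 0) (B 0) = μS := by simpa using hBBF 0 0
  have bb01 : Bil (B 0) (B 1) = 0 := by simpa using hBBF 0 1
  have bb10 : Bil (B 1) (B 0) = 0 := by simpa using hBBF 1 0
  have bb11 : Bil (B 1) (B 1) = μS := by simpa using hBBF 1 1
  have bp00 : Bil (B 0) (P 0) = μMS := by rw [hsymm]; exact pb00
  have bp01 : Bil (B 0) (P 1) = 0 := by rw [hsymm]; exact pb10
  have bp10 : Bil (B 1) (P 0) = 0 := by rw [hsymm]; exact pb01
  have bp11 : Bil (B 1) (P 1) = μMS := by rw [hsymm]; exact pb11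
  have hJH2 : Bil J H = -μ := by rw [hsymm]; exact hHJ
  have hMJ : Bil M J = μMS := by rw [hsymm]; exact hJM
  have hSJ : Bil S J = μS := by rw [hsymm]; exact hJS
  have hSH : Bil S H = μMS := by rw [hsymm]; exact hHS
  have hMH : Bil M H = 0 := by rw [hsymm]; exact hHM
  have hBJ2 : ∀ a, Bil (B a) J = 0 := fun a => by rw [hsymm]; exact hJBF a
  have hPJ2 : ∀ a, Bil (P a) J = 0 := fun a => by rw [hsymm]; exact hJPF a
  have hBH2 : ∀ a, Bil (B a) H = 0 := fun a => by rw [hsymm]; exact hHBF a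
  have hPH2 : ∀ a, Bil (P a) H = 0 := fun a => by rw [hsymm]; exact hHPF a
  have hMP : ∀ a, Bil M (P a) = 0 := fun a => by rw [hsymm]; exact hPM a
  have hSP : ∀ a, Bil S (P a) = 0 := fun a => by rw [hsymm]; exact hPS a
  have hMB : ∀ a, Bil M (B a) = 0 := fun a => by rw [hsymm]; exact hBM a
  have hSB : ∀ a, Bil S (B a) = 0 := fun a => by rw [hsymm]; exact hBS a
  have hSM : Bil S M = 0 := by rw [hsymm]; exact hMS
  refine ⟨?_, ?_, ?_⟩
  · apply red
    · intro y z; simp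
    · intro a b ha hb y z
      have h3 := congrArg₂ (· + ·) (ha y z) (hb y z)
      simp only [add_zero] at h3
      simp only [map_add, LinearMap.add_apply]
      rw [← h3]; abel
    · intro c a ha y z
      have h := ha y z
      simp only [map_smul, LinearMap.smul_apply, ← smul_add, h, smul_zero]
    intro i
    apply red
    · intro z; simp
    · intro a b ha hb z
      have h3 := congrArg₂ (· + ·) (ha z) (hb z)
      simp only [add_zero] at h3
      simp only [map_add, LinearMap.add_apply]
      rw [← h3]; abel
    · intro c a ha z
      have h := ha z
      simp only [map_smul, LinearMap.smul_apply, ← smul_add, h, smul_zero]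
    intro j
    apply red
    · simp
    · intro a b ha hb
      have h3 := congrArg₂ (· + ·) ha hb
      simp only [add_zero] at h3
      simp only [map_add, LinearMap.add_apply]
      rw [← h3]; abel
    · intro c a ha
      simp only [map_smul, LinearMap.smul_apply, ← smul_add, ha, smul_zero]
    intro k
    obtain h|h|h|h|h|h|h|h := hmem i <;> rw [h] <;> clear h <;>
    (obtain h|h|h|h|h|h|h|h := hmem j <;> rw [h] <;> clear h) <;>
    (obtain h|h|h|h|h|h|h|h := hmem k <;> rw [h] <;> clear h) <;>
    · simp only [hJB, hJP, hBH, hBB, hBP, hMcentral, hScentral, hJH, hHP, hPP, hxx, hxM, hxS,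
        hHJ0, hBJ, hPJ, hHB, hPH, hPBbr, e00, e01, e10, e11, Fin.sum_univ_two, neg_zero,
        zero_smul, one_smul, neg_smul, neg_neg, zero_add, add_zero, map_zero, map_neg, map_add,
        map_smul, smul_zero, LinearMap.zero_apply]
      try abel
  · apply red
    · intro y z; simp
    · intro a b ha hb y z
      have h3 := congrArg₂ (· + ·) (ha y z) (hb y z)
      simp only [add_zero] at h3
      simp only [map_add, LinearMap.add_apply]
      rw [← h3]; abel
    · intro c a ha y z
      have h := ha y z
      simp only [map_smul, LinearMap.smul_apply, ← smul_add, h, smul_zero]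
    intro i
    apply red
    · intro z; simp
    · intro a b ha hb z
      have h3 := congrArg₂ (· + ·) (ha z) (hb z)
      simp only [add_zero] at h3
      simp only [map_add, LinearMap.add_apply]
      rw [← h3]; abel
    · intro c a ha z
      have h := ha z
      simp only [map_smul, LinearMap.smul_apply, ← smul_add, h, smul_zero]
    intro j
    apply red
    · simp
    · intro a b ha hb
      have h3 := congrArg₂ (· + ·) ha hb
      simp only [add_zero] at h3
      simp only [map_add, LinearMap.add_apply]
      rw [← h3]; abel
    · intro c a ha
      simp only [map_smul, LinearMap.smul_apply, ← smul_add, ha, smul_zero]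
    intro k
    obtain h|h|h|h|h|h|h|h := hmem i <;> rw [h] <;> clear h <;>
    (obtain h|h|h|h|h|h|h|h := hmem j <;> rw [h] <;> clear h) <;>
    (obtain h|h|h|h|h|h|h|h := hmem k <;> rw [h] <;> clear h) <;>
    · simp only [hJB, hJP, hBH, hBB, hBP, hMcentral, hScentral, hJH, hHP, hPP, hxx, hxM, hxS,
        hHJ0, hBJ, hPJ, hHB, hPH, hPBbr, e00, e01, e10, e11, Fin.sum_univ_two, neg_zero,
        zero_smul, one_smul, neg_smul, neg_neg, zero_add, add_zero, map_zero, map_neg, map_add,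
        map_smul, smul_zero, LinearMap.zero_apply, LinearMap.add_apply, LinearMap.neg_apply,
        LinearMap.smul_apply, smul_eq_mul, mul_zero, zero_mul, mul_one, one_mul,
        hHJ, hJJ, hHH, hJM, hJS, hHS, hJBF, hJPF, hHBF, hHPF, hHM, hPPF, hPM, hPS, hBM, hBS,
        hMM, hMS, hSS, pb00, pb01, pb10, pb11, bb00, bb01, bb10, bb11, bp00, bp01, bp10, bp11,
        hJH2, hMJ, hSJ, hSH, hMH, hBJ2, hPJ2, hBH2, hPH2, hMP, hSP, hMB, hSB, hSM]
      try ring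
  · constructor
    · -- nondegenerate → μMS ≠ 0
      intro hnd h0
      have hM0 : ∀ y : V, Bil M y = 0 := by
        apply red
        · simp
        · intro a b ha hb; simp [map_add, ha, hb]
        · intro c a ha; simp [map_smul, ha]
        intro i
        obtain h|h|h|h|h|h|h|h := hmem i <;> rw [h] <;>
          simp [hMJ, hMH, hMB, hMP, hMM, hMS, h0]
      have hMeq : M = 0 := hnd M hM0
      have := hindep.ne_zero 6
      exact this (by rw [show (![J, B 0, B 1, H, P 0, P 1, M, S] : Fin 8 → V) 6 = M from rfl, hMeq])
    · -- μMS ≠ 0 → nondegenerate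
      intro hμ x hx
      let bb : Module.Basis (Fin 8) ℝ V := Module.Basis.mk hindep hspan.ge
      have hbb : ∀ i, bb i = ![J, B 0, B 1, H, P 0, P 1, M, S] i := fun i => by
        simp [bb, Module.Basis.mk_apply]
      have rep := Module.Basis.sum_repr bb x
      have keyw : ∀ w, (∑ i, bb.repr x i * Bil (![J, B 0, B 1, H, P 0, P 1, M, S] i) w) = 0 := by
        intro w
        have h := hx w
        rw [← rep] at h
        simpa [map_sum, LinearMap.sum_apply, map_smul, LinearMap.smul_apply, smul_eq_mul, hbb] using h

      have hv0 : ![J, B 0, B 1, H, P 0, P 1, M, S] 0 = J := rfl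
      have hv1 : ![J, B 0, B 1, H, P 0, P 1, M, S] 1 = B 0 := rfl
      have hv2 : ![J, B 0, B 1, H, P 0, P 1, M, S] 2 = B 1 := rfl
      have hv3 : ![J, B 0, B 1, H, P 0, P 1, M, S] 3 = H := rfl
      have hv4 : ![J, B 0, B 1, H, P 0, P 1, M, S] 4 = P 0 := rfl
      have hv5 : ![J, B 0, B 1, H, P 0, P 1, M, S] 5 = P 1 := rfl
      have hv6 : ![J, B 0, B 1, H, P 0, P 1, M, S] 6 = M := rfl
      have hv7 : ![J, B 0, B 1, H, P 0, P 1, M, S] 7 = S := rfl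
      have hBP2 : ∀ a b, Bil (B a) (P b) = μMS * (if b = a then 1 else 0) := fun a b => by
        rw [hsymm]; exact hPB b a
      have eJ := keyw J
      have eH := keyw H
      have eB0 := keyw (B 0)
      have eB1 := keyw (B 1)
      have eP0 := keyw (P 0)
      have eP1 := keyw (P 1)
      have eM := keyw M
      have eS := keyw S
      simp only [Fin.sum_univ_eight, hv0, hv1, hv2, hv3, hv4, hv5, hv6, hv7] at eJ eH eB0 eB1 eP0 eP1 eM eS
      simp [hHJ, hJJ, hHH, hPB, hBBF, hJM, hJS, hHS, hJBF, hJPF, hHBF, hHPF, hHM, hPPF, hPM,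
        hPS, hBM, hBS, hMM, hMS, hSS, hJH2, hMJ, hSJ, hSH, hMH, hBJ2, hPJ2, hBH2, hPH2, hMP, hSP,
        hMB, hSB, hSM, hBP2] at eJ eH eB0 eB1 eP0 eP1 eM eS

      have c1 : bb.repr x 1 = 0 := eP0.resolve_right hμ
      have c2 : bb.repr x 2 = 0 := eP1.resolve_right hμ
      have c0 : bb.repr x 0 = 0 := eM.resolve_right hμ
      have c3 : bb.repr x 3 = 0 := by
        rw [c0] at eS; simp [hμ] at eS; exact eS
      have c7 : bb.repr x 7 = 0 := by
        rw [c0, c3] at eH; simp [hμ] at eH; exact eH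
      have c6 : bb.repr x 6 = 0 := by
        rw [c0, c3, c7] at eJ; simp [hμ] at eJ; exact eJ
      have c4 : bb.repr x 4 = 0 := by
        rw [c1] at eB0; simp [hμ] at eB0; exact eB0
      have c5 : bb.repr x 5 = 0 := by
        rw [c2] at eB1; simp [hμ] at eB1; exact eB1
      have hall : ∀ i, bb.repr x i = 0 := by
        intro i; fin_cases i
        · exact c0
        · exact c1
        · exact c2
        · exact c3
        · exact c4
        · exact c5
        · exact c6
        · exact c7
      rw [← rep]
      exact Finset.sum_eq_zero fun i _ => by rw [hall i, zero_smul]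
end

section
/- Fix a real number Λ and a sign σ ∈ {1, −1}, and let g be the six-dimensional real Lie algebra with basis {J, B_1, B_2, H, P_1, P_2} and nonzero brackets [J,B_a] = ε_{am}B_m, [J,P_a] = ε_{am}P_m, [B_a,H] = −ε_{am}P_m, [H,P_a] = σΛ²ε_{am}B_m (the (A)dS-Galilei algebra; the Galilei algebra when Λ = 0). Then every invariant symmetric bilinear form B on g satisfies B(x,y) = 0 whenever x lies in the span of {B_1, B_2, P_1, P_2}; consequently g admits no nondegenerate invariant symmetric bilinear form. -/
/-- For the (A)dS-Galilei algebra in 2+1 dimensions (the Galilei algebra when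
`Λ = 0`), every invariant symmetric bilinear form vanishes against the span of
`{B_1, B_2, P_1, P_2}`; consequently there is no nondegenerate invariant symmetric bilinear
form. -/
theorem galilei_no_invariant_metric
    (Λ σ : ℝ) (hσ : σ = 1 ∨ σ = -1)
    (g : Type*) [LieRing g] [LieAlgebra ℝ g]
    (J H : g) (B P : Fin 2 → g)
    (hindep : LinearIndependent ℝ ![J, B 0, B 1, H, P 0, P 1])
    (hspan : Submodule.span ℝ (Set.range ![J, B 0, B 1, H, P 0, P 1]) = ⊤)
    (hJB : ∀ a, ⁅J, B a⁆ = ∑ m, eps a m • B m)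
    (hJP : ∀ a, ⁅J, P a⁆ = ∑ m, eps a m • P m)
    (hBH : ∀ a, ⁅B a, H⁆ = ∑ m, (-(eps a m)) • P m)
    (hHP : ∀ a, ⁅H, P a⁆ = ∑ m, (σ * Λ ^ 2 * eps a m) • B m)
    (hJH : ⁅J, H⁆ = 0)
    (hBB : ∀ a b, ⁅B a, B b⁆ = 0)
    (hBP : ∀ a b, ⁅B a, P b⁆ = 0)
    (hPP : ∀ a b, ⁅P a, P b⁆ = 0) :
    (∀ Bil : g →ₗ[ℝ] g →ₗ[ℝ] ℝ,
        (∀ x y : g, Bil x y = Bil y x) →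
        (∀ x y z : g, Bil ⁅z, x⁆ y + Bil x ⁅z, y⁆ = 0) →
        ∀ x ∈ Submodule.span ℝ ({B 0, B 1, P 0, P 1} : Set g), ∀ y : g, Bil x y = 0) ∧
    ¬ ∃ Bil : g →ₗ[ℝ] g →ₗ[ℝ] ℝ,
        (∀ x y : g, Bil x y = Bil y x) ∧
        (∀ x y z : g, Bil ⁅z, x⁆ y + Bil x ⁅z, y⁆ = 0) ∧
        (∀ x : g, (∀ y : g, Bil x y = 0) → x = 0) := by
  -- concrete brackets
  have hJB0 : ⁅J, B 0⁆ = B 1 := by rw [hJB]; simp [eps, Fin.sum_univ_two]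
  have hJB1 : ⁅J, B 1⁆ = -B 0 := by rw [hJB]; simp [eps, Fin.sum_univ_two]
  have hJP0 : ⁅J, P 0⁆ = P 1 := by rw [hJP]; simp [eps, Fin.sum_univ_two]
  have hJP1 : ⁅J, P 1⁆ = -P 0 := by rw [hJP]; simp [eps, Fin.sum_univ_two]
  have hB0H : ⁅B 0, H⁆ = -P 1 := by rw [hBH]; simp [eps, Fin.sum_univ_two]
  have hB1H : ⁅B 1, H⁆ = P 0 := by rw [hBH]; simp [eps, Fin.sum_univ_two]
  have hB0J : ⁅B 0, J⁆ = -B 1 := by rw [← lie_skew, hJB0]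
  have hB1J : ⁅B 1, J⁆ = B 0 := by rw [← lie_skew, hJB1, neg_neg]
  have hP0J : ⁅P 0, J⁆ = -P 1 := by rw [← lie_skew, hJP0]
  have hP1J : ⁅P 1, J⁆ = P 0 := by rw [← lie_skew, hJP1, neg_neg]
  have hHB0 : ⁅H, B 0⁆ = P 1 := by rw [← lie_skew, hB0H, neg_neg]
  have hHB1 : ⁅H, B 1⁆ = -P 0 := by rw [← lie_skew, hB1H]
  have main : ∀ Bil : g →ₗ[ℝ] g →ₗ[ℝ] ℝ,
      (∀ x y : g, Bil x y = Bil y x) →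
      (∀ x y z : g, Bil ⁅z, x⁆ y + Bil x ⁅z, y⁆ = 0) →
      ∀ x ∈ Submodule.span ℝ ({B 0, B 1, P 0, P 1} : Set g), ∀ y : g, Bil x y = 0 := by
    intro Bil hsym hinv x hx y
    -- F1 : Bil (P b) J = 0
    have F1 : ∀ b, Bil (P b) J = 0 := by
      have h0 := hinv (P 1) J J
      rw [hJP1, lie_self] at h0
      have h1 := hinv (P 0) J J
      rw [hJP0, lie_self] at h1
      intro b; fin_cases b
      · simpa using h0
      · simpa using h1
    -- F2 : Bil (B b) J = 0
    have F2 : ∀ b, Bil (B b) J = 0 := by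
      have h0 := hinv (B 1) J J
      rw [hJB1, lie_self] at h0
      have h1 := hinv (B 0) J J
      rw [hJB0, lie_self] at h1
      intro b; fin_cases b
      · simpa using h0
      · simpa using h1
    -- F3 : Bil (B b) (B c) = 0
    have F3 : ∀ b c, Bil (B b) (B c) = 0 := by
      intro b c
      have h0 := hinv J (B c) (B 1)
      rw [hB1J, hBB] at h0
      have h1 := hinv J (B c) (B 0)
      rw [hB0J, hBB] at h1
      fin_cases b
      · simpa using h0
      · simpa using h1
    -- F4 : Bil (B b) (P c) = 0
    have F4 : ∀ b c, Bil (B b) (P c) = 0 := by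
      intro b c
      have h0 := hinv J (P c) (B 1)
      rw [hB1J, hBP] at h0
      have h1 := hinv J (P c) (B 0)
      rw [hB0J, hBP] at h1
      fin_cases b
      · simpa using h0
      · simpa using h1
    -- F5 : Bil (P b) (P c) = 0
    have F5 : ∀ b c, Bil (P b) (P c) = 0 := by
      intro b c
      have h0 := hinv J (P c) (P 1)
      rw [hP1J, hPP] at h0
      have h1 := hinv J (P c) (P 0)
      rw [hP0J, hPP] at h1
      fin_cases b
      · simpa using h0
      · simpa using h1
    -- F6 : Bil (P b) H = 0
    have F6 : ∀ b, Bil (P b) H = 0 := by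
      have h0 := hinv (B 0) H H
      rw [hHB0, lie_self] at h0
      have h1 := hinv (B 1) H H
      rw [hHB1, lie_self] at h1
      intro b; fin_cases b
      · simpa using h1
      · simpa using h0
    -- F7 : Bil (B b) H = 0
    have F7 : ∀ b, Bil (B b) H = 0 := by
      have h0 := hinv J H (B 1)
      rw [hB1H, hB1J] at h0
      have h1 := hinv J H (B 0)
      rw [hB0H, hB0J] at h1
      have hs0 : Bil J (P 0) = Bil (P 0) J := hsym J (P 0)
      have hs1 : Bil J (P 1) = Bil (P 1) J := hsym J (P 1)
      simp only [map_neg, LinearMap.neg_apply] at h0 h1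
      intro b; fin_cases b
      · show Bil (B 0) H = 0
        linarith [h0, hs0, F1 0]
      · show Bil (B 1) H = 0
        linarith [h1, hs1, F1 1]
    have F8 : ∀ b c, Bil (P b) (B c) = 0 := fun b c => by rw [hsym]; exact F4 c b
    -- any x with Bil x (basis) = 0 pairs to zero with everything
    have key : ∀ x : g, (∀ i, Bil x (![J, B 0, B 1, H, P 0, P 1] i) = 0) →
        ∀ y : g, Bil x y = 0 := by
      intro x hxv y
      have hle : Submodule.span ℝ (Set.range ![J, B 0, B 1, H, P 0, P 1]) ≤
          LinearMap.ker (Bil x) := by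
        rw [Submodule.span_le]
        rintro _ ⟨i, rfl⟩
        exact hxv i
      have hy : y ∈ LinearMap.ker (Bil x) := hle (hspan.ge Submodule.mem_top)
      exact hy
    have hBall : ∀ b, ∀ z : g, Bil (B b) z = 0 := by
      intro b
      apply key
      intro i
      fin_cases i
      · exact F2 b
      · exact F3 b 0
      · exact F3 b 1
      · exact F7 b
      · exact F4 b 0
      · exact F4 b 1
    have hPall : ∀ b, ∀ z : g, Bil (P b) z = 0 := by
      intro b
      apply key
      intro i
      fin_cases i
      · exact F1 b
      · exact F8 b 0
      · exact F8 b 1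
      · exact F6 b
      · exact F5 b 0
      · exact F5 b 1
    -- now extend over x in the span
    have hle : Submodule.span ℝ ({B 0, B 1, P 0, P 1} : Set g) ≤
        LinearMap.ker (Bil.flip y) := by
      rw [Submodule.span_le]
      intro z hz
      simp only [Set.mem_insert_iff, Set.mem_singleton_iff] at hz
      rcases hz with rfl | rfl | rfl | rfl
      · exact hBall 0 y
      · exact hBall 1 y
      · exact hPall 0 y
      · exact hPall 1 y
    exact hle hx
  refine ⟨main, ?_⟩
  rintro ⟨Bil, hsym, hinv, hnd⟩
  have hmem : B 0 ∈ Submodule.span ℝ ({B 0, B 1, P 0, P 1} : Set g) :=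
    Submodule.subset_span (by simp)
  have hB0 : B 0 = 0 := hnd (B 0) (fun y => main Bil hsym hinv (B 0) hmem y)
  have hne := hindep.ne_zero 1
  simp only [Matrix.cons_val_one, Matrix.head_cons] at hne
  exact hne hB0
end

section
/- Let ac be the six-dimensional real Lie algebra with basis {J, B_1, B_2, H, P_1, P_2} and nonzero brackets [J,B_a] = ε_{am}B_m, [J,P_a] = ε_{am}P_m, [B_a,P_b] = −ε_{ab}H, [H,P_a] = ε_{am}B_m, [P_a,P_b] = −ε_{ab}J (the three-dimensional AdS-Carroll algebra), and let p be the six-dimensional real Lie algebra with basis {J, B_1, B_2, H, P_1, P_2} and nonzero brackets [J,B_a] = ε_{am}B_m, [J,P_a] = ε_{am}P_m, [B_a,B_b] = −ε_{ab}J, [B_a,H] = −ε_{am}P_m, [B_a,P_b] = −ε_{ab}H (the three-dimensional Poincaré algebra). Then the linear map determined by J ↦ J, H ↦ H, B_a ↦ P_a, P_a ↦ B_a is an isomorphism of Lie algebras from ac onto p. -/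
set_option maxHeartbeats 1000000


lemma cons_val_five' {α : Type*} (x : α) (u : Fin 5 → α) :
    Matrix.vecCons x u 5 = u 4 := rfl

lemma cons_val_five'' {α : Type*} (x : α) (u : Fin 5 → α) (h : 5 < 6) :
    Matrix.vecCons x u ⟨5, h⟩ = u 4 := rfl

/-- The linear map determined by `J ↦ J`, `H ↦ H`, `B_a ↦ P_a`, `P_a ↦ B_a`
is an isomorphism of Lie algebras from the three-dimensional AdS-Carroll algebra onto the
three-dimensional Poincaré algebra. -/
theorem adscarroll_iso_poincare
    (ac : Type*) [LieRing ac] [LieAlgebra ℝ ac]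
    (p : Type*) [LieRing p] [LieAlgebra ℝ p]
    (J H : ac) (B P : Fin 2 → ac)
    (J' H' : p) (B' P' : Fin 2 → p)
    -- AdS-Carroll algebra structure on `ac`
    (hindep : LinearIndependent ℝ ![J, B 0, B 1, H, P 0, P 1])
    (hspan : Submodule.span ℝ (Set.range ![J, B 0, B 1, H, P 0, P 1]) = ⊤)
    (hJB : ∀ a, ⁅J, B a⁆ = ∑ m, eps a m • B m)
    (hJP : ∀ a, ⁅J, P a⁆ = ∑ m, eps a m • P m)
    (hBP : ∀ a b, ⁅B a, P b⁆ = (-(eps a b)) • H)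
    (hHP : ∀ a, ⁅H, P a⁆ = ∑ m, eps a m • B m)
    (hPP : ∀ a b, ⁅P a, P b⁆ = (-(eps a b)) • J)
    (hBB : ∀ a b, ⁅B a, B b⁆ = 0)
    (hBH : ∀ a, ⁅B a, H⁆ = 0)
    (hJH : ⁅J, H⁆ = 0)
    -- Poincaré algebra structure on `p`
    (hindep' : LinearIndependent ℝ ![J', B' 0, B' 1, H', P' 0, P' 1])
    (hspan' : Submodule.span ℝ (Set.range ![J', B' 0, B' 1, H', P' 0, P' 1]) = ⊤)
    (hJB' : ∀ a, ⁅J', B' a⁆ = ∑ m, eps a m • B' m)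
    (hJP' : ∀ a, ⁅J', P' a⁆ = ∑ m, eps a m • P' m)
    (hBB' : ∀ a b, ⁅B' a, B' b⁆ = (-(eps a b)) • J')
    (hBH' : ∀ a, ⁅B' a, H'⁆ = ∑ m, (-(eps a m)) • P' m)
    (hBP' : ∀ a b, ⁅B' a, P' b⁆ = (-(eps a b)) • H')
    (hHP' : ∀ a, ⁅H', P' a⁆ = 0)
    (hPP' : ∀ a b, ⁅P' a, P' b⁆ = 0)
    (hJH' : ⁅J', H'⁆ = 0) :
    ∃ e : ac ≃ₗ⁅ℝ⁆ p,
      e J = J' ∧ e H = H' ∧ (∀ a, e (B a) = P' a) ∧ (∀ a, e (P a) = B' a) := by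

  -- Bases
  set v : Fin 6 → ac := ![J, B 0, B 1, H, P 0, P 1] with hv
  set v' : Fin 6 → p := ![J', B' 0, B' 1, H', P' 0, P' 1] with hv'
  let b : Module.Basis (Fin 6) ℝ ac := Module.Basis.mk hindep (by rw [hspan])
  let b' : Module.Basis (Fin 6) ℝ p := Module.Basis.mk hindep' (by rw [hspan'])
  have hb : ∀ i, b i = v i := fun i => by simp [b, v]
  have hb' : ∀ i, b' i = v' i := fun i => by simp [b', v']
  -- the permutation 0↦0, 1↦4, 2↦5, 3↦3, 4↦1, 5↦2 (an involution)
  let σ : Fin 6 ≃ Fin 6 :=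
    ⟨![0, 4, 5, 3, 1, 2], ![0, 4, 5, 3, 1, 2], by decide, by decide⟩
  let e : ac ≃ₗ[ℝ] p := b.equiv b' σ
  have he : ∀ i, e (b i) = b' (σ i) := fun i => b.equiv_apply i b' σ
  have heJ : e J = J' := by have := he 0; rwa [hb, hb'] at this
  have heB0 : e (B 0) = P' 0 := by have := he 1; rwa [hb, hb'] at this
  have heB1 : e (B 1) = P' 1 := by have := he 2; rwa [hb, hb'] at this
  have heH : e H = H' := by have := he 3; rwa [hb, hb'] at this
  have heP0 : e (P 0) = B' 0 := by have := he 4; rwa [hb, hb'] at this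
  have heP1 : e (P 1) = B' 1 := by have := he 5; rwa [hb, hb'] at this
  -- reversed brackets
  have hBJ : ∀ a, ⁅B a, J⁆ = -∑ m, eps a m • B m := fun a => by
    rw [← lie_skew, hJB]
  have hPJ : ∀ a, ⁅P a, J⁆ = -∑ m, eps a m • P m := fun a => by
    rw [← lie_skew, hJP]
  have hPB : ∀ a b, ⁅P a, B b⁆ = -((-(eps b a)) • H) := fun a c => by
    rw [← lie_skew, hBP]
  have hPH : ∀ a, ⁅P a, H⁆ = -∑ m, eps a m • B m := fun a => by
    rw [← lie_skew, hHP]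
  have hHB : ∀ a, ⁅H, B a⁆ = 0 := fun a => by rw [← lie_skew, hBH, neg_zero]
  have hHJ : ⁅H, J⁆ = 0 := by rw [← lie_skew, hJH, neg_zero]
  have hPB' : ∀ a b, ⁅P' a, B' b⁆ = -((-(eps b a)) • H') := fun a c => by
    rw [← lie_skew, hBP']
  have hHB' : ∀ a, ⁅H', B' a⁆ = -∑ m, (-(eps a m)) • P' m := fun a => by
    rw [← lie_skew, hBH']
  have hBJ' : ∀ a, ⁅B' a, J'⁆ = -∑ m, eps a m • B' m := fun a => by
    rw [← lie_skew, hJB']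
  have hPJ' : ∀ a, ⁅P' a, J'⁆ = -∑ m, eps a m • P' m := fun a => by
    rw [← lie_skew, hJP']
  have hPH' : ∀ a, ⁅P' a, H'⁆ = 0 := fun a => by rw [← lie_skew, hHP', neg_zero]
  have hHJ' : ⁅H', J'⁆ = 0 := by rw [← lie_skew, hJH', neg_zero]
  -- bracket preservation
  have key : ∀ x y : ac, e ⁅x, y⁆ = ⁅e x, e y⁆ := by
    let f : ac →ₗ[ℝ] ac →ₗ[ℝ] p := LinearMap.mk₂ ℝ (fun x y => e ⁅x, y⁆)
      (fun x y z => by simp [add_lie])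
      (fun c x y => by simp [smul_lie])
      (fun x y z => by simp [lie_add])
      (fun c x y => by simp [lie_smul])
    let g : ac →ₗ[ℝ] ac →ₗ[ℝ] p := LinearMap.mk₂ ℝ (fun x y => ⁅e x, e y⁆)
      (fun x y z => by simp [add_lie])
      (fun c x y => by simp [smul_lie])
      (fun x y z => by simp [lie_add])
      (fun c x y => by simp [lie_smul])
    have hfg : f = g := by
      apply b.ext; intro i
      apply b.ext; intro j
      have hfg' : e ⁅b i, b j⁆ = ⁅e (b i), e (b j)⁆ → f (b i) (b j) = g (b i) (b j) := by
        intro h; simpa [f, g] using h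
      apply hfg'
      rw [hb i, hb j]
      fin_cases i <;> fin_cases j <;>
        simp only [hv, Matrix.cons_val_zero, Matrix.cons_val_one, Matrix.head_cons,
          Matrix.cons_val_two, Matrix.tail_cons, Matrix.cons_val_three,
          Matrix.cons_val_four, Matrix.cons_val_succ, cons_val_five', cons_val_five'', Matrix.cons_val', Fin.isValue] <;>
        simp [hJB, hJP, hBP, hHP, hPP, hBB, hBH, hJH, hBJ, hPJ, hPB, hPH, hHB, hHJ,
          hJB', hJP', hBB', hBH', hBP', hHP', hPP', hJH', hPB', hHB', hBJ', hPJ', hPH', hHJ',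
          Fin.sum_univ_two, eps, heJ, heH, heB0, heB1, heP0, heP1, lie_self] <;>
        module
    intro x y
    have h1 := LinearMap.congr_fun hfg x
    simpa [f, g] using LinearMap.congr_fun h1 y
  refine ⟨{ toLieHom := { toLinearMap := e.toLinearMap, map_lie' := fun {x y} => key x y },
            invFun := e.symm, left_inv := e.left_inv, right_inv := e.right_inv },
    heJ, heH, fun a => ?_, fun a => ?_⟩ <;>
  · fin_cases a
    · first | exact heB0 | exact heP0
    · first | exact heB1 | exact heP1
end

section
/- The six-dimensional real Lie algebra with basis {J, B_1, B_2, H, P_1, P_2} and nonzero brackets [J,B_a] = ε_{am}B_m, [J,P_a] = ε_{am}P_m, [B_a,P_b] = −ε_{ab}H − δ_{ab}J, [H,P_a] = −P_a, [H,B_a] = B_a (the three-dimensional carrollian light cone algebra) is isomorphic as a real Lie algebra to so(3,1), the Lie algebra of real 4×4 matrices X satisfying Xᵀη + ηX = 0 where η = diag(−1,1,1,1). -/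
/-- The Kronecker delta on `Fin 2`. -/
def kron (a b : Fin 2) : ℝ := if a = b then 1 else 0

/-- The 4×4 Minkowski metric `diag(−1,1,1,1)`. -/
noncomputable def eta4 : Matrix (Fin 4) (Fin 4) ℝ := Matrix.diagonal ![-1, 1, 1, 1]

noncomputable def MJ : Matrix (Fin 4) (Fin 4) ℝ := !![0,0,0,0; 0,0,-1,0; 0,1,0,0; 0,0,0,0]
noncomputable def MB0 : Matrix (Fin 4) (Fin 4) ℝ := !![0,1,0,0; 1,0,0,-1; 0,0,0,0; 0,1,0,0]
noncomputable def MB1 : Matrix (Fin 4) (Fin 4) ℝ := !![0,0,1,0; 0,0,0,0; 1,0,0,-1; 0,0,1,0]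
noncomputable def MH : Matrix (Fin 4) (Fin 4) ℝ := !![0,0,0,1; 0,0,0,0; 0,0,0,0; 1,0,0,0]
noncomputable def MP0 : Matrix (Fin 4) (Fin 4) ℝ :=
  !![0,0,1/2,0; 0,0,0,0; 1/2,0,0,1/2; 0,0,-(1/2),0]
noncomputable def MP1 : Matrix (Fin 4) (Fin 4) ℝ :=
  !![0,-(1/2),0,0; -(1/2),0,0,-(1/2); 0,0,0,0; 0,1/2,0,0]

noncomputable def mv : Fin 6 → Matrix (Fin 4) (Fin 4) ℝ := ![MJ, MB0, MB1, MH, MP0, MP1]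

lemma mJB0 : MJ * MB0 - MB0 * MJ = MB1 := by
  ext k l
  fin_cases k <;> fin_cases l <;>
    norm_num [MJ, MB0, MB1, MH, MP0, MP1, Matrix.mul_apply, Matrix.sub_apply,
      Matrix.neg_apply, Matrix.zero_apply, Fin.sum_univ_four]
lemma mJB1 : MJ * MB1 - MB1 * MJ = -MB0 := by
  ext k l
  fin_cases k <;> fin_cases l <;>
    norm_num [MJ, MB0, MB1, MH, MP0, MP1, Matrix.mul_apply, Matrix.sub_apply,
      Matrix.neg_apply, Matrix.zero_apply, Fin.sum_univ_four]
lemma mJH : MJ * MH - MH * MJ = 0 := by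
  ext k l
  fin_cases k <;> fin_cases l <;>
    norm_num [MJ, MB0, MB1, MH, MP0, MP1, Matrix.mul_apply, Matrix.sub_apply,
      Matrix.neg_apply, Matrix.zero_apply, Fin.sum_univ_four]
lemma mJP0 : MJ * MP0 - MP0 * MJ = MP1 := by
  ext k l
  fin_cases k <;> fin_cases l <;>
    norm_num [MJ, MB0, MB1, MH, MP0, MP1, Matrix.mul_apply, Matrix.sub_apply,
      Matrix.neg_apply, Matrix.zero_apply, Fin.sum_univ_four]
lemma mJP1 : MJ * MP1 - MP1 * MJ = -MP0 := by
  ext k l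
  fin_cases k <;> fin_cases l <;>
    norm_num [MJ, MB0, MB1, MH, MP0, MP1, Matrix.mul_apply, Matrix.sub_apply,
      Matrix.neg_apply, Matrix.zero_apply, Fin.sum_univ_four]
lemma mB0B1 : MB0 * MB1 - MB1 * MB0 = 0 := by
  ext k l
  fin_cases k <;> fin_cases l <;>
    norm_num [MJ, MB0, MB1, MH, MP0, MP1, Matrix.mul_apply, Matrix.sub_apply,
      Matrix.neg_apply, Matrix.zero_apply, Fin.sum_univ_four]
lemma mB0H : MB0 * MH - MH * MB0 = -MB0 := by
  ext k l
  fin_cases k <;> fin_cases l <;>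
    norm_num [MJ, MB0, MB1, MH, MP0, MP1, Matrix.mul_apply, Matrix.sub_apply,
      Matrix.neg_apply, Matrix.zero_apply, Fin.sum_univ_four]
lemma mB0P0 : MB0 * MP0 - MP0 * MB0 = -MJ := by
  ext k l
  fin_cases k <;> fin_cases l <;>
    norm_num [MJ, MB0, MB1, MH, MP0, MP1, Matrix.mul_apply, Matrix.sub_apply,
      Matrix.neg_apply, Matrix.zero_apply, Fin.sum_univ_four]
lemma mB0P1 : MB0 * MP1 - MP1 * MB0 = -MH := by
  ext k l
  fin_cases k <;> fin_cases l <;>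
    norm_num [MJ, MB0, MB1, MH, MP0, MP1, Matrix.mul_apply, Matrix.sub_apply,
      Matrix.neg_apply, Matrix.zero_apply, Fin.sum_univ_four]
lemma mB1H : MB1 * MH - MH * MB1 = -MB1 := by
  ext k l
  fin_cases k <;> fin_cases l <;>
    norm_num [MJ, MB0, MB1, MH, MP0, MP1, Matrix.mul_apply, Matrix.sub_apply,
      Matrix.neg_apply, Matrix.zero_apply, Fin.sum_univ_four]
lemma mB1P0 : MB1 * MP0 - MP0 * MB1 = MH := by
  ext k l
  fin_cases k <;> fin_cases l <;>
    norm_num [MJ, MB0, MB1, MH, MP0, MP1, Matrix.mul_apply, Matrix.sub_apply,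
      Matrix.neg_apply, Matrix.zero_apply, Fin.sum_univ_four]
lemma mB1P1 : MB1 * MP1 - MP1 * MB1 = -MJ := by
  ext k l
  fin_cases k <;> fin_cases l <;>
    norm_num [MJ, MB0, MB1, MH, MP0, MP1, Matrix.mul_apply, Matrix.sub_apply,
      Matrix.neg_apply, Matrix.zero_apply, Fin.sum_univ_four]
lemma mHP0 : MH * MP0 - MP0 * MH = -MP0 := by
  ext k l
  fin_cases k <;> fin_cases l <;>
    norm_num [MJ, MB0, MB1, MH, MP0, MP1, Matrix.mul_apply, Matrix.sub_apply,
      Matrix.neg_apply, Matrix.zero_apply, Fin.sum_univ_four]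
lemma mHP1 : MH * MP1 - MP1 * MH = -MP1 := by
  ext k l
  fin_cases k <;> fin_cases l <;>
    norm_num [MJ, MB0, MB1, MH, MP0, MP1, Matrix.mul_apply, Matrix.sub_apply,
      Matrix.neg_apply, Matrix.zero_apply, Fin.sum_univ_four]
lemma mP0P1 : MP0 * MP1 - MP1 * MP0 = 0 := by
  ext k l
  fin_cases k <;> fin_cases l <;>
    norm_num [MJ, MB0, MB1, MH, MP0, MP1, Matrix.mul_apply, Matrix.sub_apply,
      Matrix.neg_apply, Matrix.zero_apply, Fin.sum_univ_four]

-- each generator lies in so(3,1)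
lemma so_MJ : (MJ).transpose * eta4 + eta4 * MJ = 0 := by
  ext k l
  fin_cases k <;> fin_cases l <;>
    norm_num [MJ, eta4, Matrix.mul_apply, Matrix.add_apply, Matrix.diagonal,
      Matrix.transpose_apply, Matrix.zero_apply, Matrix.vecHead, Matrix.vecTail, Fin.sum_univ_four]
lemma so_MB0 : (MB0).transpose * eta4 + eta4 * MB0 = 0 := by
  ext k l
  fin_cases k <;> fin_cases l <;>
    norm_num [MB0, eta4, Matrix.mul_apply, Matrix.add_apply, Matrix.diagonal,
      Matrix.transpose_apply, Matrix.zero_apply, Matrix.vecHead, Matrix.vecTail, Fin.sum_univ_four]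
lemma so_MB1 : (MB1).transpose * eta4 + eta4 * MB1 = 0 := by
  ext k l
  fin_cases k <;> fin_cases l <;>
    norm_num [MB1, eta4, Matrix.mul_apply, Matrix.add_apply, Matrix.diagonal,
      Matrix.transpose_apply, Matrix.zero_apply, Matrix.vecHead, Matrix.vecTail, Fin.sum_univ_four]
lemma so_MH : (MH).transpose * eta4 + eta4 * MH = 0 := by
  ext k l
  fin_cases k <;> fin_cases l <;>
    norm_num [MH, eta4, Matrix.mul_apply, Matrix.add_apply, Matrix.diagonal,
      Matrix.transpose_apply, Matrix.zero_apply, Matrix.vecHead, Matrix.vecTail, Fin.sum_univ_four]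
lemma so_MP0 : (MP0).transpose * eta4 + eta4 * MP0 = 0 := by
  ext k l
  fin_cases k <;> fin_cases l <;>
    norm_num [MP0, eta4, Matrix.mul_apply, Matrix.add_apply, Matrix.diagonal,
      Matrix.transpose_apply, Matrix.zero_apply, Matrix.vecHead, Matrix.vecTail, Fin.sum_univ_four]
lemma so_MP1 : (MP1).transpose * eta4 + eta4 * MP1 = 0 := by
  ext k l
  fin_cases k <;> fin_cases l <;>
    norm_num [MP1, eta4, Matrix.mul_apply, Matrix.add_apply, Matrix.diagonal,
      Matrix.transpose_apply, Matrix.zero_apply, Matrix.vecHead, Matrix.vecTail, Fin.sum_univ_four]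

/-- Explicit left inverse of the embedding. -/
noncomputable def finv {g : Type*} [AddCommGroup g] [Module ℝ g]
    (J H : g) (B P : Fin 2 → g) : Matrix (Fin 4) (Fin 4) ℝ →ₗ[ℝ] g where
  toFun X := (-X 1 2) • J + ((X 0 1 - X 1 3)/2) • B 0 + ((X 0 2 - X 2 3)/2) • B 1
      + (X 0 3) • H + (X 0 2 + X 2 3) • P 0 + (-(X 0 1 + X 1 3)) • P 1
  map_add' X Y := by
    simp only [Matrix.add_apply]
    module
  map_smul' c X := by
    simp only [Matrix.smul_apply, smul_eq_mul, RingHom.id_apply]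
    module

set_option maxHeartbeats 1000000 in
/-- The three-dimensional carrollian light cone algebra is isomorphic, as a
real Lie algebra, to `so(3,1)`, the Lie algebra of real 4×4 matrices `X` with
`Xᵀη + ηX = 0`, `η = diag(−1,1,1,1)` (with bracket the matrix commutator). -/
theorem carrollian_light_cone_iso_so31
    (g : Type*) [LieRing g] [LieAlgebra ℝ g]
    (J H : g) (B P : Fin 2 → g)
    (hindep : LinearIndependent ℝ ![J, B 0, B 1, H, P 0, P 1])
    (hspan : Submodule.span ℝ (Set.range ![J, B 0, B 1, H, P 0, P 1]) = ⊤)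
    (hJB : ∀ a, ⁅J, B a⁆ = ∑ m, eps a m • B m)
    (hJP : ∀ a, ⁅J, P a⁆ = ∑ m, eps a m • P m)
    (hBP : ∀ a b, ⁅B a, P b⁆ = (-(eps a b)) • H + (-(kron a b)) • J)
    (hHP : ∀ a, ⁅H, P a⁆ = -(P a))
    (hHB : ∀ a, ⁅H, B a⁆ = B a)
    (hJH : ⁅J, H⁆ = 0)
    (hBB : ∀ a b, ⁅B a, B b⁆ = 0)
    (hPP : ∀ a b, ⁅P a, P b⁆ = 0) :
    ∃ e : g →ₗ[ℝ] Matrix (Fin 4) (Fin 4) ℝ,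
      Function.Injective e ∧
      (∀ x y : g, e ⁅x, y⁆ = e x * e y - e y * e x) ∧
      Set.range e = {X : Matrix (Fin 4) (Fin 4) ℝ | X.transpose * eta4 + eta4 * X = 0} := by
  let b : Module.Basis (Fin 6) ℝ g := Module.Basis.mk hindep hspan.ge
  let e : g →ₗ[ℝ] Matrix (Fin 4) (Fin 4) ℝ := b.constr ℝ mv
  have he : ∀ i : Fin 6, e (![J, B 0, B 1, H, P 0, P 1] i) = mv i := by
    intro i
    have h1 : (![J, B 0, B 1, H, P 0, P 1] : Fin 6 → g) i = b i :=
      (Module.Basis.mk_apply hindep hspan.ge i).symm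
    rw [h1]
    exact b.constr_basis ℝ mv i
  have heJ : e J = MJ := he 0
  have heB0 : e (B 0) = MB0 := he 1
  have heB1 : e (B 1) = MB1 := he 2
  have heH : e H = MH := he 3
  have heP0 : e (P 0) = MP0 := he 4
  have heP1 : e (P 1) = MP1 := he 5
  have hsetspan : Submodule.span ℝ ({J, B 0, B 1, H, P 0, P 1} : Set g) = ⊤ := by
    rw [← hspan]
    congr 1
    simp only [Matrix.range_cons, Matrix.range_empty, Set.union_empty, Set.union_singleton]
    ext z
    simp only [Set.mem_insert_iff, Set.mem_union, Set.mem_singleton_iff]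
    tauto
  have hmem : ∀ x : g, x ∈ Submodule.span ℝ ({J, B 0, B 1, H, P 0, P 1} : Set g) := by
    intro x; rw [hsetspan]; trivial
  -- concrete bracket relations
  have c1 : ⁅J, B 0⁆ = B 1 := by rw [hJB]; simp [eps, Fin.sum_univ_two]
  have c2 : ⁅J, B 1⁆ = -B 0 := by rw [hJB]; simp [eps, Fin.sum_univ_two]
  have c3 : ⁅J, P 0⁆ = P 1 := by rw [hJP]; simp [eps, Fin.sum_univ_two]
  have c4 : ⁅J, P 1⁆ = -P 0 := by rw [hJP]; simp [eps, Fin.sum_univ_two]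
  have c5 : ⁅B 0, P 0⁆ = -J := by rw [hBP]; simp [eps, kron]
  have c6 : ⁅B 0, P 1⁆ = -H := by rw [hBP]; simp [eps, kron]
  have c7 : ⁅B 1, P 0⁆ = H := by rw [hBP]; simp [eps, kron]
  have c8 : ⁅B 1, P 1⁆ = -J := by rw [hBP]; simp [eps, kron]
  have r1 : ⁅B 0, J⁆ = -B 1 := by rw [← lie_skew, c1]
  have r2 : ⁅B 1, J⁆ = B 0 := by rw [← lie_skew, c2]; simp
  have r3 : ⁅P 0, J⁆ = -P 1 := by rw [← lie_skew, c3]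
  have r4 : ⁅P 1, J⁆ = P 0 := by rw [← lie_skew, c4]; simp
  have r5 : ⁅P 0, B 0⁆ = J := by rw [← lie_skew, c5]; simp
  have r6 : ⁅P 1, B 0⁆ = H := by rw [← lie_skew, c6]; simp
  have r7 : ⁅P 0, B 1⁆ = -H := by rw [← lie_skew, c7]
  have r8 : ⁅P 1, B 1⁆ = J := by rw [← lie_skew, c8]; simp
  have rJH : ⁅H, J⁆ = 0 := by rw [← lie_skew, hJH]; simp
  have rHB : ∀ a, ⁅B a, H⁆ = -B a := by intro a; rw [← lie_skew, hHB]
  have rHP : ∀ a, ⁅P a, H⁆ = P a := by intro a; rw [← lie_skew, hHP]; simp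
  -- the morphism property on generators
  have key : ∀ x ∈ ({J, B 0, B 1, H, P 0, P 1} : Set g),
      ∀ y ∈ ({J, B 0, B 1, H, P 0, P 1} : Set g),
      e ⁅x, y⁆ = e x * e y - e y * e x := by
    intro x hx y hy
    rcases hx with rfl | rfl | rfl | rfl | rfl | rfl <;>
      rcases hy with rfl | rfl | rfl | rfl | rfl | rfl
    · rw [lie_self, map_zero, sub_self]
    · rw [c1, heB1, heJ, heB0, mJB0]
    · rw [c2, map_neg, heB0, heJ, heB1, mJB1]
    · rw [hJH, map_zero, heJ, heH, mJH]
    · rw [c3, heP1, heJ, heP0, mJP0]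
    · rw [c4, map_neg, heP0, heJ, heP1, mJP1]
    · rw [r1, map_neg, heB1, heB0, heJ, ← neg_sub (MJ*MB0) (MB0*MJ), mJB0]
    · rw [lie_self, map_zero, sub_self]
    · rw [hBB, map_zero, heB0, heB1, mB0B1]
    · rw [rHB, map_neg, heB0, heH, mB0H]
    · rw [c5, map_neg, heJ, heB0, heP0, mB0P0]
    · rw [c6, map_neg, heH, heB0, heP1, mB0P1]
    · rw [r2, heB0, heB1, heJ, ← neg_sub (MJ*MB1) (MB1*MJ), mJB1, neg_neg]
    · rw [hBB, map_zero, heB1, heB0, ← neg_sub (MB0*MB1) (MB1*MB0), mB0B1, neg_zero]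
    · rw [lie_self, map_zero, sub_self]
    · rw [rHB, map_neg, heB1, heH, mB1H]
    · rw [c7, heH, heB1, heP0, mB1P0]
    · rw [c8, map_neg, heJ, heB1, heP1, mB1P1]
    · rw [rJH, map_zero, heH, heJ, ← neg_sub (MJ*MH) (MH*MJ), mJH, neg_zero]
    · rw [hHB, heH, heB0, ← neg_sub (MB0*MH) (MH*MB0), mB0H, neg_neg]
    · rw [hHB, heH, heB1, ← neg_sub (MB1*MH) (MH*MB1), mB1H, neg_neg]
    · rw [lie_self, map_zero, sub_self]
    · rw [hHP, map_neg, heH, heP0, mHP0]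
    · rw [hHP, map_neg, heH, heP1, mHP1]
    · rw [r3, map_neg, heP1, heP0, heJ, ← neg_sub (MJ*MP0) (MP0*MJ), mJP0]
    · rw [r5, heJ, heP0, heB0, ← neg_sub (MB0*MP0) (MP0*MB0), mB0P0, neg_neg]
    · rw [r7, map_neg, heH, heP0, heB1, ← neg_sub (MB1*MP0) (MP0*MB1), mB1P0]
    · rw [rHP, heP0, heH, ← neg_sub (MH*MP0) (MP0*MH), mHP0, neg_neg]
    · rw [lie_self, map_zero, sub_self]
    · rw [hPP, map_zero, heP0, heP1, mP0P1]
    · rw [r4, heP0, heP1, heJ, ← neg_sub (MJ*MP1) (MP1*MJ), mJP1, neg_neg]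
    · rw [r6, heH, heP1, heB0, ← neg_sub (MB0*MP1) (MP1*MB0), mB0P1, neg_neg]
    · rw [r8, heJ, heP1, heB1, ← neg_sub (MB1*MP1) (MP1*MB1), mB1P1, neg_neg]
    · rw [rHP, heP1, heH, ← neg_sub (MH*MP1) (MP1*MH), mHP1, neg_neg]
    · rw [hPP, map_zero, heP1, heP0, ← neg_sub (MP0*MP1) (MP1*MP0), mP0P1, neg_zero]
    · rw [lie_self, map_zero, sub_self]
  -- the morphism property in general
  have hlie : ∀ x y : g, e ⁅x, y⁆ = e x * e y - e y * e x := by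
    intro x y
    induction hmem x using Submodule.span_induction with
    | mem x hx =>
      induction hmem y using Submodule.span_induction with
      | mem y hy => exact key x hx y hy
      | zero => simp
      | add y z _ _ hy hz => simp only [lie_add, map_add, hy, hz, mul_add, add_mul]; abel
      | smul c y _ hy =>
        simp only [lie_smul, map_smul, hy, smul_sub, Matrix.mul_smul, Matrix.smul_mul]
    | zero => simp
    | add x z _ _ hx hz => simp only [add_lie, map_add, hx, hz, mul_add, add_mul]; abel
    | smul c x _ hx =>
      simp only [smul_lie, map_smul, hx, smul_sub, Matrix.mul_smul, Matrix.smul_mul]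
  -- left inverse
  have hfe : ∀ x : g, finv J H B P (e x) = x := by
    intro x
    induction hmem x using Submodule.span_induction with
    | mem x hx =>
      rcases hx with rfl | rfl | rfl | rfl | rfl | rfl
      · rw [heJ]
        norm_num [finv, MJ, LinearMap.coe_mk, AddHom.coe_mk, Matrix.vecHead, Matrix.vecTail, Matrix.cons_val_two, Matrix.cons_val_three] <;> module
      · rw [heB0]
        norm_num [finv, MB0, LinearMap.coe_mk, AddHom.coe_mk, Matrix.vecHead, Matrix.vecTail, Matrix.cons_val_two, Matrix.cons_val_three] <;> module
      · rw [heB1]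
        norm_num [finv, MB1, LinearMap.coe_mk, AddHom.coe_mk, Matrix.vecHead, Matrix.vecTail, Matrix.cons_val_two, Matrix.cons_val_three] <;> module
      · rw [heH]
        norm_num [finv, MH, LinearMap.coe_mk, AddHom.coe_mk, Matrix.vecHead, Matrix.vecTail, Matrix.cons_val_two, Matrix.cons_val_three] <;> module
      · rw [heP0]
        norm_num [finv, MP0, LinearMap.coe_mk, AddHom.coe_mk, Matrix.vecHead, Matrix.vecTail, Matrix.cons_val_two, Matrix.cons_val_three] <;> module
      · rw [heP1]
        norm_num [finv, MP1, LinearMap.coe_mk, AddHom.coe_mk, Matrix.vecHead, Matrix.vecTail, Matrix.cons_val_two, Matrix.cons_val_three] <;> module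
    | zero => simp
    | add x z _ _ hx hz => rw [map_add, map_add, hx, hz]
    | smul c x _ hx => rw [map_smul, map_smul, hx]
  refine ⟨e, Function.LeftInverse.injective hfe, hlie, ?_⟩
  ext X
  constructor
  · rintro ⟨x, rfl⟩
    show (e x).transpose * eta4 + eta4 * (e x) = 0
    induction hmem x using Submodule.span_induction with
    | mem y hy =>
      rcases hy with rfl | rfl | rfl | rfl | rfl | rfl
      · rw [heJ]; exact so_MJ
      · rw [heB0]; exact so_MB0
      · rw [heB1]; exact so_MB1
      · rw [heH]; exact so_MH
      · rw [heP0]; exact so_MP0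
      · rw [heP1]; exact so_MP1
    | zero => simp
    | add y z _ _ hy hz =>
      rw [map_add, Matrix.transpose_add, Matrix.add_mul, Matrix.mul_add]
      rw [add_add_add_comm, hy, hz, add_zero]
    | smul c y _ hy =>
      rw [map_smul, Matrix.transpose_smul, Matrix.smul_mul, Matrix.mul_smul, ← smul_add, hy,
        smul_zero]
  · intro hX
    have hij : ∀ i j : Fin 4, X j i * eta4 j j + eta4 i i * X i j = 0 := by
      intro i j
      have h0 := congrFun (congrFun hX i) j
      simpa [Matrix.add_apply, Matrix.mul_apply, Matrix.transpose_apply, eta4,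
        Matrix.diagonal_apply, Fin.sum_univ_four] using h0
    have e00 : X 0 0 = 0 := by have := hij 0 0; norm_num [eta4, Matrix.cons_val_two, Matrix.cons_val_three] at this; linarith
    have e11 : X 1 1 = 0 := by have := hij 1 1; norm_num [eta4, Matrix.cons_val_two, Matrix.cons_val_three] at this; linarith
    have e22 : X 2 2 = 0 := by have := hij 2 2; norm_num [eta4, Matrix.cons_val_two, Matrix.cons_val_three] at this; linarith
    have e33 : X 3 3 = 0 := by have := hij 3 3; norm_num [eta4, Matrix.cons_val_two, Matrix.cons_val_three] at this; linarith
    have e10 : X 1 0 = X 0 1 := by have := hij 0 1; norm_num [eta4, Matrix.cons_val_two, Matrix.cons_val_three] at this; linarith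
    have e20 : X 2 0 = X 0 2 := by have := hij 0 2; norm_num [eta4, Matrix.cons_val_two, Matrix.cons_val_three] at this; linarith
    have e30 : X 3 0 = X 0 3 := by have := hij 0 3; norm_num [eta4, Matrix.cons_val_two, Matrix.cons_val_three] at this; linarith
    have e21 : X 2 1 = -X 1 2 := by have := hij 1 2; norm_num [eta4, Matrix.cons_val_two, Matrix.cons_val_three] at this; linarith
    have e31 : X 3 1 = -X 1 3 := by have := hij 1 3; norm_num [eta4, Matrix.cons_val_two, Matrix.cons_val_three] at this; linarith
    have e32 : X 3 2 = -X 2 3 := by have := hij 2 3; norm_num [eta4, Matrix.cons_val_two, Matrix.cons_val_three] at this; linarith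
    refine ⟨finv J H B P X, ?_⟩
    show e ((-X 1 2) • J + ((X 0 1 - X 1 3)/2) • B 0 + ((X 0 2 - X 2 3)/2) • B 1
        + (X 0 3) • H + (X 0 2 + X 2 3) • P 0 + (-(X 0 1 + X 1 3)) • P 1) = X
    simp only [map_add, map_smul, heJ, heB0, heB1, heH, heP0, heP1]
    have f2 : ∀ h : 2 < 4, (⟨2, h⟩ : Fin 4) = 2 := fun _ => rfl
    have f3 : ∀ h : 3 < 4, (⟨3, h⟩ : Fin 4) = 3 := fun _ => rfl
    have f0 : ∀ h : 0 < 4, (⟨0, h⟩ : Fin 4) = 0 := fun _ => rfl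
    have f1 : ∀ h : 1 < 4, (⟨1, h⟩ : Fin 4) = 1 := fun _ => rfl
    ext k l
    fin_cases k <;> fin_cases l <;>
      (simp only [f0, f1, f2, f3, Matrix.add_apply, Matrix.smul_apply, smul_eq_mul] <;>
       norm_num [MJ, MB0, MB1, MH, MP0, MP1, Matrix.vecHead, Matrix.vecTail, Matrix.cons_val_two,
           Matrix.cons_val_three] <;>
       linarith [e00, e11, e22, e33, e10, e20, e30, e21, e31, e32])
end

section
/- Fix real numbers γ and χ, and let g be the six-dimensional real Lie algebra with basis {J, B_1, B_2, H, P_1, P_2} and nonzero brackets [J,B_a] = ε_{am}B_m, [J,P_a] = ε_{am}P_m, [H,B_a] = ε_{am}P_m, [H,P_a] = (1+γ)P_a − χε_{am}P_m + γε_{am}B_m + χB_a (the family of torsional galilean algebras, containing torsional galilean de Sitter for χ = 0 and torsional galilean anti-de Sitter for γ such that 1+γ² replaces the parameters accordingly). Then every invariant symmetric bilinear form B on g satisfies B(x,y) = 0 whenever x lies in the span of {B_1, B_2, P_1, P_2}; hence the space of invariant symmetric bilinear forms on g is exactly the three-parameter family determined by the values B(J,J), B(J,H), B(H,H), and none of these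 forms is nondegenerate. -/
theorem tg_aux
    (γ χ : ℝ)
    (g : Type*) [LieRing g] [LieAlgebra ℝ g]
    (J H : g) (B P : Fin 2 → g)
    (hspan : Submodule.span ℝ (Set.range ![J, B 0, B 1, H, P 0, P 1]) = ⊤)
    (hJB : ∀ a, ⁅J, B a⁆ = ∑ m, eps a m • B m)
    (hJP : ∀ a, ⁅J, P a⁆ = ∑ m, eps a m • P m)
    (hHB : ∀ a, ⁅H, B a⁆ = ∑ m, eps a m • P m)
    (hHP : ∀ a, ⁅H, P a⁆ =
      (1 + γ) • P a + (∑ m, (-(χ * eps a m)) • P m) + (∑ m, (γ * eps a m) • B m) + χ • B a)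
    (hJH : ⁅J, H⁆ = 0)
    (hBB : ∀ a b, ⁅B a, B b⁆ = 0)
    (hBP : ∀ a b, ⁅B a, P b⁆ = 0)
    (hPP : ∀ a b, ⁅P a, P b⁆ = 0)
    (Bil : g →ₗ[ℝ] g →ₗ[ℝ] ℝ)
    (hs : ∀ x y : g, Bil x y = Bil y x)
    (hi : ∀ x y z : g, Bil ⁅z, x⁆ y + Bil x ⁅z, y⁆ = 0) :
    (∀ y : g, Bil (B 0) y = 0) ∧ (∀ y : g, Bil (B 1) y = 0) ∧
    (∀ y : g, Bil (P 0) y = 0) ∧ (∀ y : g, Bil (P 1) y = 0) := by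
  have eJB0 : ⁅J, B 0⁆ = B 1 := by rw [hJB]; simp [Fin.sum_univ_two, eps]
  have eJB1 : ⁅J, B 1⁆ = -B 0 := by rw [hJB]; simp [Fin.sum_univ_two, eps]
  have eJP0 : ⁅J, P 0⁆ = P 1 := by rw [hJP]; simp [Fin.sum_univ_two, eps]
  have eJP1 : ⁅J, P 1⁆ = -P 0 := by rw [hJP]; simp [Fin.sum_univ_two, eps]
  have eHB0 : ⁅H, B 0⁆ = P 1 := by rw [hHB]; simp [Fin.sum_univ_two, eps]
  have eHB1 : ⁅H, B 1⁆ = -P 0 := by rw [hHB]; simp [Fin.sum_univ_two, eps]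
  have eHP0 : ⁅H, P 0⁆ = (1 + γ) • P 0 + (-χ) • P 1 + γ • B 1 + χ • B 0 := by
    rw [hHP]; simp [Fin.sum_univ_two, eps]
  have eHP1 : ⁅H, P 1⁆ = (1 + γ) • P 1 + χ • P 0 + (-γ) • B 0 + χ • B 1 := by
    rw [hHP]; simp [Fin.sum_univ_two, eps]
  -- the B-B pairings vanish
  have bb : ∀ u v : Fin 2, Bil (B u) (B v) = 0 := by
    have h1 : ∀ v, Bil (B 1) (B v) = 0 := by
      intro v
      have h := hi J (B v) (B 0)
      rw [show ⁅B 0, J⁆ = -B 1 by rw [← lie_skew, eJB0], hBB 0 v] at h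
      simpa using h
    have h0 : ∀ v, Bil (B 0) (B v) = 0 := by
      intro v
      have h := hi J (B v) (B 1)
      rw [show ⁅B 1, J⁆ = B 0 by rw [← lie_skew, eJB1]; simp, hBB 1 v] at h
      simpa using h
    intro u v; fin_cases u
    · exact h0 v
    · exact h1 v
  -- the P-P pairings vanish
  have pp : ∀ u v : Fin 2, Bil (P u) (P v) = 0 := by
    have h1 : ∀ v, Bil (P 1) (P v) = 0 := by
      intro v
      have h := hi H (P v) (B 0)
      rw [show ⁅B 0, H⁆ = -P 1 by rw [← lie_skew, eHB0], hBP 0 v] at h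
      simpa using h
    have h0 : ∀ v, Bil (P 0) (P v) = 0 := by
      intro v
      have h := hi H (P v) (B 1)
      rw [show ⁅B 1, H⁆ = P 0 by rw [← lie_skew, eHB1]; simp, hBP 1 v] at h
      simpa using h
    intro u v; fin_cases u
    · exact h0 v
    · exact h1 v
  -- the B-P pairings vanish
  have bp01 : Bil (B 0) (P 1) = 0 := by
    have h := hi (B 0) (B 0) H
    rw [eHB0, hs (P 1) (B 0)] at h
    linarith
  have bp10 : Bil (B 1) (P 0) = 0 := by
    have h := hi (B 1) (B 1) H
    rw [eHB1] at h
    simp only [map_neg, LinearMap.neg_apply] at h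
    rw [hs (P 0) (B 1)] at h
    linarith
  have b11 : Bil (B 1) (P 1) = Bil (B 0) (P 0) := by
    have h := hi (B 0) (P 1) J
    rw [eJB0, eJP1] at h
    simp only [map_neg] at h
    linarith
  have hA : (1 + γ) * Bil (B 0) (P 0) = 0 := by
    have h := hi (B 0) (P 0) H
    rw [eHB0, eHP0] at h
    simp only [map_add, map_smul, smul_eq_mul] at h
    rw [pp 1 0, bp01, bb 0 1, bb 0 0] at h
    linarith
  have hE : γ * Bil (B 0) (P 0) = 0 := by
    have h := hi H (P 1) (P 0)
    rw [show ⁅P 0, H⁆ = -((1 + γ) • P 0 + (-χ) • P 1 + γ • B 1 + χ • B 0) by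
        rw [← lie_skew, eHP0], hPP 0 1] at h
    simp only [map_neg, map_add, map_smul, LinearMap.neg_apply, LinearMap.add_apply,
      LinearMap.smul_apply, smul_eq_mul, map_zero] at h
    rw [pp 0 1, pp 1 1, b11, bp01] at h
    linarith
  have bp00 : Bil (B 0) (P 0) = 0 := by linear_combination hA - hE
  have bp11 : Bil (B 1) (P 1) = 0 := by rw [b11]; exact bp00
  -- pairings with J
  have jb : ∀ v : Fin 2, Bil J (B v) = 0 := by
    have h1 : Bil J (B 1) = 0 := by
      have h := hi J (B 0) J; rw [lie_self, eJB0] at h; simpa using h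
    have h0 : Bil J (B 0) = 0 := by
      have h := hi J (B 1) J; rw [lie_self, eJB1] at h; simp only [map_neg] at h
      have := h; simp at this; linarith [this]
    intro v; fin_cases v
    · exact h0
    · exact h1
  have jp : ∀ v : Fin 2, Bil J (P v) = 0 := by
    have h1 : Bil J (P 1) = 0 := by
      have h := hi J (P 0) J; rw [lie_self, eJP0] at h; simpa using h
    have h0 : Bil J (P 0) = 0 := by
      have h := hi J (P 1) J; rw [lie_self, eJP1] at h; simp only [map_neg] at h
      simp at h; linarith [h]
    intro v; fin_cases v
    · exact h0
    · exact h1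
  have hbv : ∀ v : Fin 2, Bil H (B v) = 0 := by
    have h1 : Bil H (B 1) = 0 := by
      have h := hi H (B 0) J; rw [hJH, eJB0] at h; simpa using h
    have h0 : Bil H (B 0) = 0 := by
      have h := hi H (B 1) J; rw [hJH, eJB1] at h; simp at h; linarith [h]
    intro v; fin_cases v
    · exact h0
    · exact h1
  have hpv : ∀ v : Fin 2, Bil H (P v) = 0 := by
    have h1 : Bil H (P 1) = 0 := by
      have h := hi H (P 0) J; rw [hJH, eJP0] at h; simpa using h
    have h0 : Bil H (P 0) = 0 := by
      have h := hi H (P 1) J; rw [hJH, eJP1] at h; simp at h; linarith [h]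
    intro v; fin_cases v
    · exact h0
    · exact h1
  -- a linear functional vanishing on the six basis vectors vanishes
  have vanish : ∀ x : g, Bil x J = 0 → Bil x (B 0) = 0 → Bil x (B 1) = 0 →
      Bil x H = 0 → Bil x (P 0) = 0 → Bil x (P 1) = 0 → ∀ y : g, Bil x y = 0 := by
    intro x v1 v2 v3 v4 v5 v6 y
    have hy : y ∈ Submodule.span ℝ (Set.range ![J, B 0, B 1, H, P 0, P 1]) := by
      rw [hspan]; trivial
    induction hy using Submodule.span_induction with
    | mem v hv =>
      obtain ⟨i, rfl⟩ := hv
      fin_cases i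
      · exact v1
      · exact v2
      · exact v3
      · exact v4
      · exact v5
      · exact v6
    | zero => simp
    | add u v _ _ hu hv => rw [map_add, hu, hv, add_zero]
    | smul c u _ hu => rw [map_smul, hu, smul_zero]
  exact ⟨vanish _ ((hs _ _).trans (jb 0)) (bb 0 0) (bb 0 1) ((hs _ _).trans (hbv 0)) bp00 bp01,
    vanish _ ((hs _ _).trans (jb 1)) (bb 1 0) (bb 1 1) ((hs _ _).trans (hbv 1)) bp10 bp11,
    vanish _ ((hs _ _).trans (jp 0)) ((hs _ _).trans bp00) ((hs _ _).trans bp10)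
      ((hs _ _).trans (hpv 0)) (pp 0 0) (pp 0 1),
    vanish _ ((hs _ _).trans (jp 1)) ((hs _ _).trans bp01) ((hs _ _).trans bp11)
      ((hs _ _).trans (hpv 1)) (pp 1 0) (pp 1 1)⟩

set_option maxHeartbeats 2000000 in
/-- For the torsional galilean algebras in 2+1 dimensions (parameters
`γ, χ`), every invariant symmetric bilinear form vanishes against the span of
`{B_1, B_2, P_1, P_2}`; hence the invariant symmetric bilinear forms are exactly the
three-parameter family determined by the values on `(J,J)`, `(J,H)`, `(H,H)`, and none of
them is nondegenerate. -/
theorem torsional_galilean_no_invariant_metric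
    (γ χ : ℝ)
    (g : Type*) [LieRing g] [LieAlgebra ℝ g]
    (J H : g) (B P : Fin 2 → g)
    (hindep : LinearIndependent ℝ ![J, B 0, B 1, H, P 0, P 1])
    (hspan : Submodule.span ℝ (Set.range ![J, B 0, B 1, H, P 0, P 1]) = ⊤)
    (hJB : ∀ a, ⁅J, B a⁆ = ∑ m, eps a m • B m)
    (hJP : ∀ a, ⁅J, P a⁆ = ∑ m, eps a m • P m)
    (hHB : ∀ a, ⁅H, B a⁆ = ∑ m, eps a m • P m)
    (hHP : ∀ a, ⁅H, P a⁆ =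
      (1 + γ) • P a + (∑ m, (-(χ * eps a m)) • P m) + (∑ m, (γ * eps a m) • B m) + χ • B a)
    (hJH : ⁅J, H⁆ = 0)
    (hBB : ∀ a b, ⁅B a, B b⁆ = 0)
    (hBP : ∀ a b, ⁅B a, P b⁆ = 0)
    (hPP : ∀ a b, ⁅P a, P b⁆ = 0) :
    -- every invariant symmetric bilinear form vanishes against span {B_1,B_2,P_1,P_2}
    (∀ Bil : g →ₗ[ℝ] g →ₗ[ℝ] ℝ,
        (∀ x y : g, Bil x y = Bil y x) →
        (∀ x y z : g, Bil ⁅z, x⁆ y + Bil x ⁅z, y⁆ = 0) →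
        ∀ x ∈ Submodule.span ℝ ({B 0, B 1, P 0, P 1} : Set g), ∀ y : g, Bil x y = 0) ∧
    -- the three-parameter family: existence …
    (∀ cJJ cJH cHH : ℝ, ∃ Bil : g →ₗ[ℝ] g →ₗ[ℝ] ℝ,
        (∀ x y : g, Bil x y = Bil y x) ∧
        (∀ x y z : g, Bil ⁅z, x⁆ y + Bil x ⁅z, y⁆ = 0) ∧
        Bil J J = cJJ ∧ Bil J H = cJH ∧ Bil H H = cHH) ∧
    -- … and uniqueness given the values on (J,J), (J,H), (H,H)
    (∀ Bil Bil' : g →ₗ[ℝ] g →ₗ[ℝ] ℝ,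
        (∀ x y : g, Bil x y = Bil y x) →
        (∀ x y z : g, Bil ⁅z, x⁆ y + Bil x ⁅z, y⁆ = 0) →
        (∀ x y : g, Bil' x y = Bil' y x) →
        (∀ x y z : g, Bil' ⁅z, x⁆ y + Bil' x ⁅z, y⁆ = 0) →
        Bil J J = Bil' J J → Bil J H = Bil' J H → Bil H H = Bil' H H → Bil = Bil') ∧
    -- no invariant symmetric bilinear form is nondegenerate
    (∀ Bil : g →ₗ[ℝ] g →ₗ[ℝ] ℝ,
        (∀ x y : g, Bil x y = Bil y x) →
        (∀ x y z : g, Bil ⁅z, x⁆ y + Bil x ⁅z, y⁆ = 0) →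
        ¬ (∀ x : g, (∀ y : g, Bil x y = 0) → x = 0)) := by
  have part1 : ∀ Bil : g →ₗ[ℝ] g →ₗ[ℝ] ℝ,
      (∀ x y : g, Bil x y = Bil y x) →
      (∀ x y z : g, Bil ⁅z, x⁆ y + Bil x ⁅z, y⁆ = 0) →
      ∀ x ∈ Submodule.span ℝ ({B 0, B 1, P 0, P 1} : Set g), ∀ y : g, Bil x y = 0 := by
    intro Bil hs hi x hx
    obtain ⟨a1, a2, a3, a4⟩ :=
      tg_aux γ χ g J H B P hspan hJB hJP hHB hHP hJH hBB hBP hPP Bil hs hi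
    induction hx using Submodule.span_induction with
    | mem v hv =>
      rw [Set.mem_insert_iff, Set.mem_insert_iff, Set.mem_insert_iff,
        Set.mem_singleton_iff] at hv
      rcases hv with rfl | rfl | rfl | rfl
      · exact a1
      · exact a2
      · exact a3
      · exact a4
    | zero => intro y; simp
    | add u v _ _ hu hv => intro y; rw [map_add, LinearMap.add_apply, hu y, hv y, add_zero]
    | smul c u _ hu => intro y; rw [map_smul, LinearMap.smul_apply, hu y, smul_zero]
  refine ⟨part1, ?_, ?_, ?_⟩
  · -- existence
    intro cJJ cJH cHH
    let e : Fin 6 → g := ![J, B 0, B 1, H, P 0, P 1]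
    let hb : Module.Basis (Fin 6) ℝ g := Module.Basis.mk hindep hspan.ge
    have hbv : ∀ i, hb i = e i := fun i => Module.Basis.mk_apply hindep hspan.ge i
    let φ : g →ₗ[ℝ] ℝ := hb.coord 0
    let ψ : g →ₗ[ℝ] ℝ := hb.coord 3
    have coordv : ∀ i j : Fin 6, hb.coord i (e j) = if j = i then 1 else 0 := by
      intro i j
      rw [← hbv]
      simp [Module.Basis.coord_apply, Finsupp.single_apply]
    have hφB0 : φ (B 0) = 0 := by simpa [φ, ψ, e] using coordv 0 1
    have hφB1 : φ (B 1) = 0 := by simpa [φ, ψ, e] using coordv 0 2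
    have hφP0 : φ (P 0) = 0 := by simpa [φ, ψ, e] using coordv 0 4
    have hφP1 : φ (P 1) = 0 := by simpa [φ, ψ, e] using coordv 0 5
    have hψB0 : ψ (B 0) = 0 := by simpa [φ, ψ, e] using coordv 3 1
    have hψB1 : ψ (B 1) = 0 := by simpa [φ, ψ, e] using coordv 3 2
    have hψP0 : ψ (P 0) = 0 := by simpa [φ, ψ, e] using coordv 3 4
    have hψP1 : ψ (P 1) = 0 := by simpa [φ, ψ, e] using coordv 3 5
    have hφJ : φ J = 1 := by simpa [φ, ψ, e] using coordv 0 0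
    have hφH : φ H = 0 := by simpa [φ, ψ, e] using coordv 0 3
    have hψJ : ψ J = 0 := by simpa [φ, ψ, e] using coordv 3 0
    have hψH : ψ H = 1 := by simpa [φ, ψ, e] using coordv 3 3
    set S : Submodule ℝ g := Submodule.span ℝ ({B 0, B 1, P 0, P 1} : Set g) with hSdef
    have memB0 : B 0 ∈ S := Submodule.subset_span (by simp)
    have memB1 : B 1 ∈ S := Submodule.subset_span (by simp)
    have memP0 : P 0 ∈ S := Submodule.subset_span (by simp)
    have memP1 : P 1 ∈ S := Submodule.subset_span (by simp)
    have eJB0 : ⁅J, B 0⁆ = B 1 := by rw [hJB]; simp [Fin.sum_univ_two, eps]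
    have eJB1 : ⁅J, B 1⁆ = -B 0 := by rw [hJB]; simp [Fin.sum_univ_two, eps]
    have eJP0 : ⁅J, P 0⁆ = P 1 := by rw [hJP]; simp [Fin.sum_univ_two, eps]
    have eJP1 : ⁅J, P 1⁆ = -P 0 := by rw [hJP]; simp [Fin.sum_univ_two, eps]
    have eHB0 : ⁅H, B 0⁆ = P 1 := by rw [hHB]; simp [Fin.sum_univ_two, eps]
    have eHB1 : ⁅H, B 1⁆ = -P 0 := by rw [hHB]; simp [Fin.sum_univ_two, eps]
    have eHP0 : ⁅H, P 0⁆ = (1 + γ) • P 0 + (-χ) • P 1 + γ • B 1 + χ • B 0 := by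
      rw [hHP]; simp [Fin.sum_univ_two, eps]
    have eHP1 : ⁅H, P 1⁆ = (1 + γ) • P 1 + χ • P 0 + (-γ) • B 0 + χ • B 1 := by
      rw [hHP]; simp [Fin.sum_univ_two, eps]
    have skewmem : ∀ x y : g, ⁅x, y⁆ ∈ S → ⁅y, x⁆ ∈ S := by
      intro x y h; rw [← lie_skew]; exact neg_mem h
    have hself : ∀ x : g, ⁅x, x⁆ ∈ S := by
      intro x; rw [lie_self]; exact S.zero_mem
    have hJHm : ⁅J, H⁆ ∈ S := by rw [hJH]; exact S.zero_mem
    have hJBm : ∀ a, ⁅J, B a⁆ ∈ S := by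
      intro a; fin_cases a
      · show ⁅J, B 0⁆ ∈ S; rw [eJB0]; exact memB1
      · show ⁅J, B 1⁆ ∈ S; rw [eJB1]; exact neg_mem memB0
    have hJPm : ∀ a, ⁅J, P a⁆ ∈ S := by
      intro a; fin_cases a
      · show ⁅J, P 0⁆ ∈ S; rw [eJP0]; exact memP1
      · show ⁅J, P 1⁆ ∈ S; rw [eJP1]; exact neg_mem memP0
    have hHBm : ∀ a, ⁅H, B a⁆ ∈ S := by
      intro a; fin_cases a
      · show ⁅H, B 0⁆ ∈ S; rw [eHB0]; exact memP1
      · show ⁅H, B 1⁆ ∈ S; rw [eHB1]; exact neg_mem memP0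
    have hHPm : ∀ a, ⁅H, P a⁆ ∈ S := by
      intro a; fin_cases a
      · show ⁅H, P 0⁆ ∈ S
        rw [eHP0]
        exact add_mem (add_mem (add_mem (S.smul_mem _ memP0) (S.smul_mem _ memP1))
          (S.smul_mem _ memB1)) (S.smul_mem _ memB0)
      · show ⁅H, P 1⁆ ∈ S
        rw [eHP1]
        exact add_mem (add_mem (add_mem (S.smul_mem _ memP1) (S.smul_mem _ memP0))
          (S.smul_mem _ memB0)) (S.smul_mem _ memB1)
    have hBBm : ∀ a b, ⁅B a, B b⁆ ∈ S := by
      intro a b; rw [hBB]; exact S.zero_mem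
    have hBPm : ∀ a b, ⁅B a, P b⁆ ∈ S := by
      intro a b; rw [hBP]; exact S.zero_mem
    have hPPm : ∀ a b, ⁅P a, P b⁆ ∈ S := by
      intro a b; rw [hPP]; exact S.zero_mem
    have base : ∀ i j : Fin 6, ⁅e i, e j⁆ ∈ S := by
      intro i j
      fin_cases i <;> fin_cases j <;>
        simp only [Fin.isValue, Matrix.cons_val_zero,
          Matrix.cons_val_one, Matrix.head_cons, Matrix.cons_val_two, Matrix.tail_cons,
          Matrix.cons_val_three, Matrix.cons_val_four, Matrix.cons_val_succ] <;>
        first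
          | exact hself _
          | exact hJHm
          | exact skewmem _ _ hJHm
          | exact hJBm _
          | exact skewmem _ _ (hJBm _)
          | exact hJPm _
          | exact skewmem _ _ (hJPm _)
          | exact hHBm _
          | exact skewmem _ _ (hHBm _)
          | exact hHPm _
          | exact skewmem _ _ (hHPm _)
          | exact hBBm _ _
          | exact hBPm _ _
          | exact skewmem _ _ (hBPm _ _)
          | exact hPPm _ _
    have hS : ∀ z x : g, ⁅z, x⁆ ∈ S := by
      intro z x
      have hz : z ∈ Submodule.span ℝ (Set.range ![J, B 0, B 1, H, P 0, P 1]) := by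
        rw [hspan]; trivial
      have hx : x ∈ Submodule.span ℝ (Set.range ![J, B 0, B 1, H, P 0, P 1]) := by
        rw [hspan]; trivial
      induction hz using Submodule.span_induction with
      | mem v hv =>
        induction hx using Submodule.span_induction with
        | mem w hw =>
          obtain ⟨i, rfl⟩ := hv; obtain ⟨j, rfl⟩ := hw; exact base i j
        | zero => rw [lie_zero]; exact S.zero_mem
        | add u w _ _ hu hw => rw [lie_add]; exact add_mem hu hw
        | smul c u _ hu => rw [lie_smul]; exact S.smul_mem c hu
      | zero => rw [zero_lie]; exact S.zero_mem
      | add u w _ _ hu hw => rw [add_lie]; exact add_mem hu hw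
      | smul c u _ hu => rw [smul_lie]; exact S.smul_mem c hu
    have hφS : ∀ v ∈ S, φ v = 0 := by
      intro v hv
      induction hv using Submodule.span_induction with
      | mem w hw =>
        rw [Set.mem_insert_iff, Set.mem_insert_iff, Set.mem_insert_iff,
          Set.mem_singleton_iff] at hw
        rcases hw with rfl | rfl | rfl | rfl <;> assumption
      | zero => simp
      | add u w _ _ hu hw => rw [map_add, hu, hw, add_zero]
      | smul c u _ hu => rw [map_smul, hu, smul_zero]
    have hψS : ∀ v ∈ S, ψ v = 0 := by
      intro v hv
      induction hv using Submodule.span_induction with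
      | mem w hw =>
        rw [Set.mem_insert_iff, Set.mem_insert_iff, Set.mem_insert_iff,
          Set.mem_singleton_iff] at hw
        rcases hw with rfl | rfl | rfl | rfl <;> assumption
      | zero => simp
      | add u w _ _ hu hw => rw [map_add, hu, hw, add_zero]
      | smul c u _ hu => rw [map_smul, hu, smul_zero]
    have hφbr : ∀ z x : g, φ ⁅z, x⁆ = 0 := fun z x => hφS _ (hS z x)
    have hψbr : ∀ z x : g, ψ ⁅z, x⁆ = 0 := fun z x => hψS _ (hS z x)
    refine ⟨LinearMap.mk₂ ℝ
      (fun x y => cJJ * (φ x * φ y) + cJH * (φ x * ψ y + ψ x * φ y) + cHH * (ψ x * ψ y))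
      (fun m₁ m₂ n => by simp only [map_add]; ring)
      (fun c m n => by simp only [map_smul, smul_eq_mul]; ring)
      (fun m n₁ n₂ => by simp only [map_add]; ring)
      (fun c m n => by simp only [map_smul, smul_eq_mul]; ring), ?_, ?_, ?_, ?_, ?_⟩
    · intro x y; simp only [LinearMap.mk₂_apply]; ring
    · intro x y z
      simp only [LinearMap.mk₂_apply, hφbr, hψbr]
      ring
    · simp [LinearMap.mk₂_apply, hφJ, hψJ]
    · simp [LinearMap.mk₂_apply, hφJ, hψJ, hφH, hψH]
    · simp [LinearMap.mk₂_apply, hφH, hψH]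
  · -- uniqueness
    intro Bil Bil' hs hi hs' hi' h1 h2 h3
    obtain ⟨a1, a2, a3, a4⟩ :=
      tg_aux γ χ g J H B P hspan hJB hJP hHB hHP hJH hBB hBP hPP Bil hs hi
    obtain ⟨b1, b2, b3, b4⟩ :=
      tg_aux γ χ g J H B P hspan hJB hJP hHB hHP hJH hBB hBP hPP Bil' hs' hi'
    have rowB0 : ∀ y, Bil (B 0) y = Bil' (B 0) y := fun y => (a1 y).trans (b1 y).symm
    have rowB1 : ∀ y, Bil (B 1) y = Bil' (B 1) y := fun y => (a2 y).trans (b2 y).symm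
    have rowP0 : ∀ y, Bil (P 0) y = Bil' (P 0) y := fun y => (a3 y).trans (b3 y).symm
    have rowP1 : ∀ y, Bil (P 1) y = Bil' (P 1) y := fun y => (a4 y).trans (b4 y).symm
    have rowJ : ∀ y : g, Bil J y = Bil' J y := by
      intro y
      have hy : y ∈ Submodule.span ℝ (Set.range ![J, B 0, B 1, H, P 0, P 1]) := by
        rw [hspan]; trivial
      induction hy using Submodule.span_induction with
      | mem v hv =>
        obtain ⟨i, rfl⟩ := hv
        fin_cases i
        · exact h1
        · exact (hs _ _).trans ((rowB0 J).trans (hs' _ _))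
        · exact (hs _ _).trans ((rowB1 J).trans (hs' _ _))
        · exact h2
        · exact (hs _ _).trans ((rowP0 J).trans (hs' _ _))
        · exact (hs _ _).trans ((rowP1 J).trans (hs' _ _))
      | zero => simp
      | add u w _ _ hu hw => simp only [map_add, hu, hw]
      | smul c u _ hu => simp only [map_smul, hu]
    have rowH : ∀ y : g, Bil H y = Bil' H y := by
      intro y
      have hy : y ∈ Submodule.span ℝ (Set.range ![J, B 0, B 1, H, P 0, P 1]) := by
        rw [hspan]; trivial
      induction hy using Submodule.span_induction with
      | mem v hv =>
        obtain ⟨i, rfl⟩ := hv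
        fin_cases i
        · exact (hs _ _).trans (h2.trans (hs' _ _))
        · exact (hs _ _).trans ((rowB0 H).trans (hs' _ _))
        · exact (hs _ _).trans ((rowB1 H).trans (hs' _ _))
        · exact h3
        · exact (hs _ _).trans ((rowP0 H).trans (hs' _ _))
        · exact (hs _ _).trans ((rowP1 H).trans (hs' _ _))
      | zero => simp
      | add u w _ _ hu hw => simp only [map_add, hu, hw]
      | smul c u _ hu => simp only [map_smul, hu]
    have key : ∀ x y : g, Bil x y = Bil' x y := by
      intro x y
      have hx : x ∈ Submodule.span ℝ (Set.range ![J, B 0, B 1, H, P 0, P 1]) := by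
        rw [hspan]; trivial
      induction hx using Submodule.span_induction with
      | mem v hv =>
        obtain ⟨i, rfl⟩ := hv
        fin_cases i
        · exact rowJ y
        · exact rowB0 y
        · exact rowB1 y
        · exact rowH y
        · exact rowP0 y
        · exact rowP1 y
      | zero => simp
      | add u w _ _ hu hw =>
        rw [map_add, LinearMap.add_apply, map_add, LinearMap.add_apply, hu, hw]
      | smul c u _ hu =>
        rw [map_smul, LinearMap.smul_apply, map_smul, LinearMap.smul_apply, hu]
    exact LinearMap.ext fun x => LinearMap.ext fun y => key x y
  · -- no nondegenerate invariant form
    intro Bil hs hi hnd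
    obtain ⟨a1, _, _, _⟩ :=
      tg_aux γ χ g J H B P hspan hJB hJP hHB hHP hJH hBB hBP hPP Bil hs hi
    have hB0 : B 0 = 0 := hnd (B 0) a1
    have := hindep.ne_zero 1
    simp only [Matrix.cons_val_one, Matrix.head_cons] at this
    exact this hB0
end

section
/- Let g be the five-dimensional real Lie algebra with basis {J, H, P_1, P_2, Z} and nonzero brackets [J,P_a] = ε_{am}P_m and [P_a,P_b] = ε_{ab}Z, with H and Z central (the aristotelian static algebra in 2+1 dimensions with the central extension Z). Then: (i) for all real χ_J, χ_{JH}, χ_H, χ_P the symmetric bilinear form determined by B(J,J) = χ_J, B(J,H) = χ_{JH}, B(H,H) = χ_H, B(P_a,P_b) = χ_Pδ_{ab}, B(J,Z) = χ_P, with all other basis pairings zero, is invariant; (ii) every invariant symmetric bilinear form on g is of this type; and (iii) such a form is nondegenerate if and only if χ_P ≠ 0 and χ_H ≠ 0. -/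
/-- If a bilinear form satisfies the invariance identity on basis vectors, it is invariant. -/
lemma invariance_of_basis {g : Type*} [LieRing g] [LieAlgebra ℝ g] {ι : Type*}
    (b : Module.Basis ι ℝ g) (Bil : g →ₗ[ℝ] g →ₗ[ℝ] ℝ)
    (h : ∀ k i j, Bil ⁅b k, b i⁆ (b j) + Bil (b i) ⁅b k, b j⁆ = 0) :
    ∀ x y z : g, Bil ⁅z, x⁆ y + Bil x ⁅z, y⁆ = 0 := by
  let T : g →ₗ[ℝ] g →ₗ[ℝ] g →ₗ[ℝ] ℝ :=
    (LinearMap.llcomp ℝ g g (g →ₗ[ℝ] ℝ) Bil) ∘ₗ (LieAlgebra.ad ℝ g : g →ₗ[ℝ] Module.End ℝ g) +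
    LinearMap.lflip.toLinearMap ∘ₗ ((LinearMap.llcomp ℝ g g (g →ₗ[ℝ] ℝ) Bil.flip) ∘ₗ (LieAlgebra.ad ℝ g : g →ₗ[ℝ] Module.End ℝ g))
  have hT : ∀ z x y, T z x y = Bil ⁅z, x⁆ y + Bil x ⁅z, y⁆ := by
    intro z x y; simp [T, LieAlgebra.ad_apply]
  have hz : T = 0 := b.ext fun k => b.ext fun i => b.ext fun j => by simp [hT, h]
  intro x y z; rw [← hT, hz]; simp

set_option maxHeartbeats 16000000 in
/-- For the centrally extended aristotelian static algebra in 2+1 dimensions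
(basis `{J, H, P_1, P_2, Z}`, nonzero brackets `[J,P_a] = ε_{am}P_m`, `[P_a,P_b] = ε_{ab}Z`,
with `H`, `Z` central): (i) the indicated symmetric bilinear forms are invariant for all
parameter values; (ii) every invariant symmetric bilinear form is of this type; (iii) such a
form is nondegenerate iff `χ_P ≠ 0` and `χ_H ≠ 0`. -/
theorem aristotelian_static_extended_metrics
    (g : Type*) [LieRing g] [LieAlgebra ℝ g]
    (J H Z : g) (P : Fin 2 → g)
    (hindep : LinearIndependent ℝ ![J, H, P 0, P 1, Z])
    (hspan : Submodule.span ℝ (Set.range ![J, H, P 0, P 1, Z]) = ⊤)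
    (hJP : ∀ a, ⁅J, P a⁆ = ∑ m, eps a m • P m)
    (hPP : ∀ a b, ⁅P a, P b⁆ = eps a b • Z)
    (hHcentral : ∀ x : g, ⁅H, x⁆ = 0)
    (hZcentral : ∀ x : g, ⁅Z, x⁆ = 0) :
    -- (i) existence and invariance
    (∀ χJ χJH χH χP : ℝ, ∃ Bil : g →ₗ[ℝ] g →ₗ[ℝ] ℝ,
        (∀ x y : g, Bil x y = Bil y x) ∧
        (∀ x y z : g, Bil ⁅z, x⁆ y + Bil x ⁅z, y⁆ = 0) ∧
        Bil J J = χJ ∧ Bil J H = χJH ∧ Bil H H = χH ∧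
        (∀ a b, Bil (P a) (P b) = χP * kron a b) ∧ Bil J Z = χP ∧
        (∀ a, Bil J (P a) = 0) ∧ (∀ a, Bil H (P a) = 0) ∧ Bil H Z = 0 ∧
        (∀ a, Bil (P a) Z = 0) ∧ Bil Z Z = 0) ∧
    -- (ii) every invariant symmetric bilinear form is of this type
    (∀ Bil : g →ₗ[ℝ] g →ₗ[ℝ] ℝ,
        (∀ x y : g, Bil x y = Bil y x) →
        (∀ x y z : g, Bil ⁅z, x⁆ y + Bil x ⁅z, y⁆ = 0) →
        ∃ χJ χJH χH χP : ℝ,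
          Bil J J = χJ ∧ Bil J H = χJH ∧ Bil H H = χH ∧
          (∀ a b, Bil (P a) (P b) = χP * kron a b) ∧ Bil J Z = χP ∧
          (∀ a, Bil J (P a) = 0) ∧ (∀ a, Bil H (P a) = 0) ∧ Bil H Z = 0 ∧
          (∀ a, Bil (P a) Z = 0) ∧ Bil Z Z = 0) ∧
    -- (iii) nondegeneracy criterion
    (∀ (χJ χJH χH χP : ℝ) (Bil : g →ₗ[ℝ] g →ₗ[ℝ] ℝ),
        (∀ x y : g, Bil x y = Bil y x) →
        (∀ x y z : g, Bil ⁅z, x⁆ y + Bil x ⁅z, y⁆ = 0) →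
        Bil J J = χJ → Bil J H = χJH → Bil H H = χH →
        (∀ a b, Bil (P a) (P b) = χP * kron a b) → Bil J Z = χP →
        (∀ a, Bil J (P a) = 0) → (∀ a, Bil H (P a) = 0) → Bil H Z = 0 →
        (∀ a, Bil (P a) Z = 0) → Bil Z Z = 0 →
        ((∀ x : g, (∀ y : g, Bil x y = 0) → x = 0) ↔ (χP ≠ 0 ∧ χH ≠ 0))) := by
  -- the bracket table
  have hJP0 : ⁅J, P 0⁆ = P 1 := by rw [hJP]; simp [eps, Fin.sum_univ_two]
  have hJP1 : ⁅J, P 1⁆ = -P 0 := by rw [hJP]; simp [eps, Fin.sum_univ_two]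
  have hP0J : ⁅P 0, J⁆ = -P 1 := by rw [← lie_skew, hJP0]
  have hP1J : ⁅P 1, J⁆ = P 0 := by rw [← lie_skew, hJP1]; simp
  have hJH : ⁅J, H⁆ = 0 := by rw [← lie_skew, hHcentral]; simp
  have hJZ : ⁅J, Z⁆ = 0 := by rw [← lie_skew, hZcentral]; simp
  have hP01 : ⁅P 0, P 1⁆ = Z := by rw [hPP]; simp [eps]
  have hP10 : ⁅P 1, P 0⁆ = -Z := by rw [hPP]; simp [eps]
  have hP00 : ⁅P 0, P 0⁆ = 0 := lie_self _
  have hP11 : ⁅P 1, P 1⁆ = 0 := lie_self _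
  have hPH : ∀ a, ⁅P a, H⁆ = 0 := fun a => by rw [← lie_skew, hHcentral]; simp
  have hPZ : ∀ a, ⁅P a, Z⁆ = 0 := fun a => by rw [← lie_skew, hZcentral]; simp
  -- the basis
  let b : Module.Basis (Fin 5) ℝ g := Module.Basis.mk hindep (by rw [hspan])
  have hb0 : b 0 = J := by simp [b]
  have hb1 : b 1 = H := by simp [b]
  have hb2 : b 2 = P 0 := by simp [b]
  have hb3 : b 3 = P 1 := by simp [b]
  have hb4 : b 4 = Z := by simp [b]
  refine ⟨?_, ?_, ?_⟩
  · -- (i)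
    intro χJ χJH χH χP
    let M : Fin 5 → Fin 5 → ℝ :=
      ![![χJ, χJH, 0, 0, χP], ![χJH, χH, 0, 0, 0],
        ![0, 0, χP, 0, 0], ![0, 0, 0, χP, 0], ![χP, 0, 0, 0, 0]]
    let Bil : g →ₗ[ℝ] g →ₗ[ℝ] ℝ := b.constr ℝ fun i => (Module.Basis.constr b ℝ) (M i)
    have hval : ∀ i j, Bil (b i) (b j) = M i j := fun i j => by
      simp [Bil, Module.Basis.constr_basis]
    have eJJ : Bil J J = χJ := by have h := hval 0 0; rw [hb0] at h; simpa [M] using h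
    have eJH : Bil J H = χJH := by have h := hval 0 1; rw [hb0, hb1] at h; simpa [M] using h
    have eHJ : Bil H J = χJH := by have h := hval 1 0; rw [hb0, hb1] at h; simpa [M] using h
    have eHH : Bil H H = χH := by have h := hval 1 1; rw [hb1] at h; simpa [M] using h
    have eJZ : Bil J Z = χP := by have h := hval 0 4; rw [hb0, hb4] at h; simpa [M] using h
    have eZJ : Bil Z J = χP := by have h := hval 4 0; rw [hb0, hb4] at h; simpa [M] using h
    have eHZ : Bil H Z = 0 := by have h := hval 1 4; rw [hb1, hb4] at h; simpa [M] using h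
    have eZH : Bil Z H = 0 := by have h := hval 4 1; rw [hb1, hb4] at h; simpa [M] using h
    have eZZ : Bil Z Z = 0 := by have h := hval 4 4; rw [hb4] at h; simpa [M] using h
    have eJP0 : Bil J (P 0) = 0 := by have h := hval 0 2; rw [hb0, hb2] at h; simpa [M] using h
    have eJP1 : Bil J (P 1) = 0 := by have h := hval 0 3; rw [hb0, hb3] at h; simpa [M] using h
    have eP0J : Bil (P 0) J = 0 := by have h := hval 2 0; rw [hb0, hb2] at h; simpa [M] using h
    have eP1J : Bil (P 1) J = 0 := by have h := hval 3 0; rw [hb0, hb3] at h; simpa [M] using h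
    have eHP0 : Bil H (P 0) = 0 := by have h := hval 1 2; rw [hb1, hb2] at h; simpa [M] using h
    have eHP1 : Bil H (P 1) = 0 := by have h := hval 1 3; rw [hb1, hb3] at h; simpa [M] using h
    have eP0H : Bil (P 0) H = 0 := by have h := hval 2 1; rw [hb1, hb2] at h; simpa [M] using h
    have eP1H : Bil (P 1) H = 0 := by have h := hval 3 1; rw [hb1, hb3] at h; simpa [M] using h
    have eP0Z : Bil (P 0) Z = 0 := by have h := hval 2 4; rw [hb2, hb4] at h; simpa [M] using h
    have eP1Z : Bil (P 1) Z = 0 := by have h := hval 3 4; rw [hb3, hb4] at h; simpa [M] using h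
    have eZP0 : Bil Z (P 0) = 0 := by have h := hval 4 2; rw [hb2, hb4] at h; simpa [M] using h
    have eZP1 : Bil Z (P 1) = 0 := by have h := hval 4 3; rw [hb3, hb4] at h; simpa [M] using h
    have eP00 : Bil (P 0) (P 0) = χP := by have h := hval 2 2; rw [hb2] at h; simpa [M] using h
    have eP11 : Bil (P 1) (P 1) = χP := by have h := hval 3 3; rw [hb3] at h; simpa [M] using h
    have eP01 : Bil (P 0) (P 1) = 0 := by have h := hval 2 3; rw [hb2, hb3] at h; simpa [M] using h
    have eP10 : Bil (P 1) (P 0) = 0 := by have h := hval 3 2; rw [hb2, hb3] at h; simpa [M] using h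
    have hsymM : Bil = Bil.flip := b.ext fun i => b.ext fun j => by
      rw [LinearMap.flip_apply, hval, hval]
      fin_cases i <;> fin_cases j <;> norm_num [M]
    have hsym : ∀ x y : g, Bil x y = Bil y x := fun x y => by
      have h2 := LinearMap.congr_fun (LinearMap.congr_fun hsymM x) y
      simpa using h2
    have hinv : ∀ x y z : g, Bil ⁅z, x⁆ y + Bil x ⁅z, y⁆ = 0 := by
      apply invariance_of_basis b
      intro k i j
      fin_cases k <;> fin_cases i <;> fin_cases j <;>
        simp [hb0, hb1, hb2, hb3, hb4, hJP0, hJP1, hP0J, hP1J, hJH, hJZ, hP01, hP10,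
          hP00, hP11, hPH, hPZ, hHcentral, hZcentral,
          eJJ, eJH, eHJ, eHH, eJZ, eZJ, eHZ, eZH, eZZ, eJP0, eJP1, eP0J, eP1J,
          eHP0, eHP1, eP0H, eP1H, eP0Z, eP1Z, eZP0, eZP1, eP00, eP11, eP01, eP10]
    refine ⟨Bil, hsym, hinv, eJJ, eJH, eHH, ?_, eJZ, ?_, ?_, eHZ, ?_, eZZ⟩
    · intro a c; fin_cases a <;> fin_cases c <;> simp [kron, eP00, eP11, eP01, eP10]
    · intro a; fin_cases a <;> assumption
    · intro a; fin_cases a <;> assumption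
    · intro a; fin_cases a <;> assumption
  · -- (ii)
    intro Bil hsym hinv
    have eP01 : Bil (P 0) (P 1) = 0 := by
      have h := hinv (P 0) (P 0) J
      rw [hJP0] at h
      have h2 := hsym (P 0) (P 1)
      linarith [h]
    have eP11 : Bil (P 1) (P 1) = Bil (P 0) (P 0) := by
      have h := hinv (P 0) (P 1) J
      rw [hJP0, hJP1] at h
      simp at h
      linarith
    have eJZ : Bil J Z = Bil (P 0) (P 0) := by
      have h := hinv J (P 1) (P 0)
      rw [hP0J, hP01] at h
      simp at h
      linarith [eP11]
    have eJP0 : Bil J (P 0) = 0 := by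
      have h := hinv J (P 1) J
      rw [hJP1] at h
      simpa using h
    have eJP1 : Bil J (P 0 + P 1) = 0 := by
      have h := hinv J (P 0) J
      rw [hJP0] at h
      simp at h
      simp [map_add, h, eJP0]
    have eJP1' : Bil J (P 1) = 0 := by
      have := eJP1; rw [map_add] at this; rw [eJP0] at this; linarith
    have eHP1 : Bil H (P 1) = 0 := by
      have h := hinv H (P 0) J
      rw [hJH, hJP0] at h
      simpa using h
    have eHP0 : Bil H (P 0) = 0 := by
      have h := hinv H (P 1) J
      rw [hJH, hJP1] at h
      simpa using h
    have eHZ : Bil H Z = 0 := by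
      have h := hinv H (P 1) (P 0)
      have h0 : ⁅P 0, H⁆ = 0 := hPH 0
      rw [h0, hP01] at h
      simpa using h
    have eP1Z : Bil (P 1) Z = 0 := by
      have h := hinv (P 1) (P 1) (P 0)
      rw [hP01] at h
      have h2 := hsym (P 1) Z
      linarith [h]
    have eP0Z : Bil (P 0) Z = 0 := by
      have h := hinv (P 0) (P 0) (P 1)
      rw [hP10] at h
      simp at h
      have h2 := hsym (P 0) Z
      linarith [h]
    have eZZ : Bil Z Z = 0 := by
      have h := hinv Z (P 1) (P 0)
      rw [hPZ 0, hP01] at h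
      simpa using h
    refine ⟨Bil J J, Bil J H, Bil H H, Bil (P 0) (P 0), rfl, rfl, rfl, ?_, eJZ, ?_, ?_, eHZ,
      ?_, eZZ⟩
    · intro a c
      fin_cases a <;> fin_cases c <;>
        simp [kron, eP01, eP11] <;> rw [hsym (P 1) (P 0)] <;> simp [eP01]
    · intro a; fin_cases a <;> simp [eJP0, eJP1']
    · intro a; fin_cases a <;> simp [eHP0, eHP1]
    · intro a; fin_cases a <;> simp [eP0Z, eP1Z]
  · -- (iii)
    intro χJ χJH χH χP Bil hsym hinv v1 v2 v3 v4 v5 v6 v7 v8 v9 v10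
    have w1 : Bil H J = χJH := (hsym H J).trans v2
    have w2 : Bil Z J = χP := (hsym Z J).trans v5
    have w3 : ∀ a, Bil (P a) J = 0 := fun a => (hsym _ J).trans (v6 a)
    have w4 : ∀ a, Bil (P a) H = 0 := fun a => (hsym _ H).trans (v7 a)
    have w5 : Bil Z H = 0 := (hsym Z H).trans v8
    have w6 : ∀ a, Bil Z (P a) = 0 := fun a => (hsym Z _).trans (v9 a)
    have hall : ∀ x : g, (∀ i : Fin 5, Bil x (b i) = 0) → ∀ y : g, Bil x y = 0 := by
      intro x h y
      rw [← b.sum_repr y]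
      simp only [map_sum, map_smul, h, smul_zero, Finset.sum_const_zero]
    constructor
    · intro hnd
      have hZne : Z ≠ 0 := by
        have := hindep.ne_zero 4
        simpa using this
      have hcP : χP ≠ 0 := by
        intro h0
        apply hZne
        apply hnd Z
        apply hall
        intro i
        fin_cases i <;> simp [hb0, hb1, hb2, hb3, hb4, w2, w5, w6, v10, h0]
      refine ⟨hcP, ?_⟩
      intro h0
      have hx : χP • H - χJH • Z = 0 := by
        apply hnd
        apply hall
        intro i
        fin_cases i <;>
          simp [hb0, hb1, hb2, hb3, hb4, map_sub, map_smul, w1, w2, v3, v8, v10, v7, w5, w6,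
            h0, smul_eq_mul]
        · ring
      have hsum : ∑ i, (![0, χP, 0, 0, -χJH] : Fin 5 → ℝ) i • ![J, H, P 0, P 1, Z] i = 0 := by
        simp [Fin.sum_univ_five]
        simpa [sub_eq_add_neg] using hx
      have := Fintype.linearIndependent_iff.mp hindep _ hsum 1
      simp at this
      exact hcP this
    · rintro ⟨hcP, hcH⟩ x hx
      obtain ⟨c, hc⟩ : ∃ c : Fin 5 → ℝ, x = ∑ i, c i • b i := ⟨b.repr x, (b.sum_repr x).symm⟩
      have E : ∀ j : Fin 5, ∑ i, c i * Bil (b i) (b j) = 0 := by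
        intro j
        have h := hx (b j)
        rw [hc] at h
        simpa [map_sum, smul_eq_mul] using h
      have E0 := E 0; have E1 := E 1; have E2 := E 2; have E3 := E 3; have E4 := E 4
      simp [Fin.sum_univ_five, hb0, hb1, hb2, hb3, hb4, v1, v2, v3, v5, v6, v7, v8, v9, v10,
        w1, w2, w3, w4, w5, w6, v4, kron] at E0 E1 E2 E3 E4
      have c2 : c 2 = 0 := E2.resolve_right hcP
      have c3 : c 3 = 0 := E3.resolve_right hcP
      have c0 : c 0 = 0 := E4.resolve_right hcP
      have c1 : c 1 = 0 := by
        rw [c0] at E1; simp at E1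
        exact E1.resolve_right hcH
      have c4 : c 4 = 0 := by
        rw [c0, c1] at E0; simp at E0
        exact E0.resolve_right hcP
      rw [hc, Fin.sum_univ_five, c0, c1, c2, c3, c4]
      simp
end

section
/- Let g be the four-dimensional real Lie algebra with basis {J, H, P_1, P_2} and nonzero brackets [J,P_a] = ε_{am}P_m and [P_a,P_b] = ε_{ab}H, with H central (the aristotelian algebra A24, special to 2+1 dimensions). Then: (i) for all real χ and χ_J the symmetric bilinear form determined by B(P_a,P_b) = χδ_{ab}, B(J,H) = χ, B(J,J) = χ_J, with all other basis pairings zero, is invariant; (ii) every invariant symmetric bilinear form on g is of this type; and (iii) such a form is nondegenerate if and only if χ ≠ 0. -/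
set_option maxHeartbeats 1000000

section
variable {g : Type*} [LieRing g] [LieAlgebra ℝ g]

/-- The invariance trilinear map. -/
noncomputable def invT (Bil : g →ₗ[ℝ] g →ₗ[ℝ] ℝ) : g →ₗ[ℝ] g →ₗ[ℝ] g →ₗ[ℝ] ℝ :=
  LinearMap.mk₂ ℝ (fun z x => Bil ⁅z, x⁆ + (Bil x).comp (LieAlgebra.ad ℝ g z))
    (fun z w x => by ext y; simp [add_lie]; ring)
    (fun c z x => by ext y; simp [smul_lie])
    (fun z x w => by ext y; simp [lie_add]; ring)
    (fun c z x => by ext y; simp [lie_smul])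

lemma invT_apply (Bil : g →ₗ[ℝ] g →ₗ[ℝ] ℝ) (z x y : g) :
    invT Bil z x y = Bil ⁅z, x⁆ y + Bil x ⁅z, y⁆ := by
  simp [invT]

lemma bil_ext_on {s : Set g} (hs : Submodule.span ℝ s = ⊤)
    {B C : g →ₗ[ℝ] g →ₗ[ℝ] ℝ} (h : ∀ x ∈ s, ∀ y ∈ s, B x y = C x y) : B = C := by
  apply LinearMap.ext_on hs
  intro x hx
  exact LinearMap.ext_on hs (fun y hy => h x hx y hy)

lemma tri_ext_on {s : Set g} (hs : Submodule.span ℝ s = ⊤)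
    {T : g →ₗ[ℝ] g →ₗ[ℝ] g →ₗ[ℝ] ℝ}
    (h : ∀ x ∈ s, ∀ y ∈ s, ∀ z ∈ s, T x y z = 0) : T = 0 := by
  apply LinearMap.ext_on hs
  intro x hx
  exact bil_ext_on hs (fun y hy z hz => h x hx y hy z hz)
end



/-- For the aristotelian algebra A24 in 2+1 dimensions (basis
`{J, H, P_1, P_2}`, nonzero brackets `[J,P_a] = ε_{am}P_m`, `[P_a,P_b] = ε_{ab}H`, with `H`
central): (i) the indicated symmetric bilinear forms are invariant for all `χ, χ_J`;
(ii) every invariant symmetric bilinear form is of this type; (iii) such a form is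
nondegenerate iff `χ ≠ 0`. -/
theorem aristotelian_A24_metrics
    (g : Type*) [LieRing g] [LieAlgebra ℝ g]
    (J H : g) (P : Fin 2 → g)
    (hindep : LinearIndependent ℝ ![J, H, P 0, P 1])
    (hspan : Submodule.span ℝ (Set.range ![J, H, P 0, P 1]) = ⊤)
    (hJP : ∀ a, ⁅J, P a⁆ = ∑ m, eps a m • P m)
    (hPP : ∀ a b, ⁅P a, P b⁆ = eps a b • H)
    (hHcentral : ∀ x : g, ⁅H, x⁆ = 0) :
    -- (i) existence and invariance
    (∀ χ χJ : ℝ, ∃ Bil : g →ₗ[ℝ] g →ₗ[ℝ] ℝ,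
        (∀ x y : g, Bil x y = Bil y x) ∧
        (∀ x y z : g, Bil ⁅z, x⁆ y + Bil x ⁅z, y⁆ = 0) ∧
        (∀ a b, Bil (P a) (P b) = χ * kron a b) ∧ Bil J H = χ ∧ Bil J J = χJ ∧
        (∀ a, Bil J (P a) = 0) ∧ Bil H H = 0 ∧ (∀ a, Bil H (P a) = 0)) ∧
    -- (ii) every invariant symmetric bilinear form is of this type
    (∀ Bil : g →ₗ[ℝ] g →ₗ[ℝ] ℝ,
        (∀ x y : g, Bil x y = Bil y x) →
        (∀ x y z : g, Bil ⁅z, x⁆ y + Bil x ⁅z, y⁆ = 0) →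
        ∃ χ χJ : ℝ,
          (∀ a b, Bil (P a) (P b) = χ * kron a b) ∧ Bil J H = χ ∧ Bil J J = χJ ∧
          (∀ a, Bil J (P a) = 0) ∧ Bil H H = 0 ∧ (∀ a, Bil H (P a) = 0)) ∧
    -- (iii) nondegeneracy criterion
    (∀ (χ χJ : ℝ) (Bil : g →ₗ[ℝ] g →ₗ[ℝ] ℝ),
        (∀ x y : g, Bil x y = Bil y x) →
        (∀ x y z : g, Bil ⁅z, x⁆ y + Bil x ⁅z, y⁆ = 0) →
        (∀ a b, Bil (P a) (P b) = χ * kron a b) → Bil J H = χ → Bil J J = χJ →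
        (∀ a, Bil J (P a) = 0) → Bil H H = 0 → (∀ a, Bil H (P a) = 0) →
        ((∀ x : g, (∀ y : g, Bil x y = 0) → x = 0) ↔ χ ≠ 0)) := by
  refine ⟨?_, ?_, ?_⟩
  · intro χ χJ
    have hJP0 : ⁅J, P 0⁆ = P 1 := by
      have := hJP 0; simpa [eps, Fin.sum_univ_two] using this
    have hJP1 : ⁅J, P 1⁆ = -P 0 := by
      have := hJP 1; simpa [eps, Fin.sum_univ_two] using this
    have hJH : ⁅J, H⁆ = 0 := by rw [← lie_skew, hHcentral]; simp
    have hPJ0 : ⁅P 0, J⁆ = -P 1 := by rw [← lie_skew, hJP0]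
    have hPJ1 : ⁅P 1, J⁆ = P 0 := by rw [← lie_skew, hJP1]; simp
    have hPH : ∀ a, ⁅P a, H⁆ = 0 := fun a => by rw [← lie_skew, hHcentral]; simp
    have hP01 : ⁅P 0, P 1⁆ = H := by have := hPP 0 1; simpa [eps] using this
    have hP10 : ⁅P 1, P 0⁆ = -H := by have := hPP 1 0; simpa [eps] using this
    let b : Module.Basis (Fin 4) ℝ g := Module.Basis.mk hindep hspan.ge
    have hb : ∀ i, b i = ![J, H, P 0, P 1] i := fun i => Module.Basis.mk_apply hindep hspan.ge i
    set M : Fin 4 → Fin 4 → ℝ := ![![χJ, χ, 0, 0], ![χ, 0, 0, 0], ![0,0,χ,0], ![0,0,0,χ]] with hM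
    refine ⟨b.constr ℝ (fun i => b.constr ℝ (fun j => M i j)), ?_⟩
    set Bil := b.constr ℝ (fun i => b.constr ℝ (fun j => M i j)) with hBil
    have hBv : ∀ i j, Bil (![J, H, P 0, P 1] i) (![J, H, P 0, P 1] j) = M i j := by
      intro i j
      rw [← hb i, ← hb j, hBil, Module.Basis.constr_basis, Module.Basis.constr_basis]
    have e00 : Bil J J = χJ := by simpa [hM] using hBv 0 0
    have e01 : Bil J H = χ := by simpa [hM] using hBv 0 1
    have e02 : Bil J (P 0) = 0 := by simpa [hM] using hBv 0 2
    have e03 : Bil J (P 1) = 0 := by simpa [hM] using hBv 0 3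
    have e10 : Bil H J = χ := by simpa [hM] using hBv 1 0
    have e11 : Bil H H = 0 := by simpa [hM] using hBv 1 1
    have e12 : Bil H (P 0) = 0 := by simpa [hM] using hBv 1 2
    have e13 : Bil H (P 1) = 0 := by simpa [hM] using hBv 1 3
    have e20 : Bil (P 0) J = 0 := by simpa [hM] using hBv 2 0
    have e21 : Bil (P 0) H = 0 := by simpa [hM] using hBv 2 1
    have e22 : Bil (P 0) (P 0) = χ := by simpa [hM] using hBv 2 2
    have e23 : Bil (P 0) (P 1) = 0 := by simpa [hM] using hBv 2 3
    have e30 : Bil (P 1) J = 0 := by simpa [hM] using hBv 3 0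
    have e31 : Bil (P 1) H = 0 := by simpa [hM] using hBv 3 1
    have e32 : Bil (P 1) (P 0) = 0 := by simpa [hM] using hBv 3 2
    have e33 : Bil (P 1) (P 1) = χ := by simpa [hM] using hBv 3 3
    have hsym : ∀ x y : g, Bil x y = Bil y x := by
      have : Bil = Bil.flip := by
        apply bil_ext_on hspan
        simp only [Set.forall_mem_range]
        intro i j
        fin_cases i <;> fin_cases j <;>
          simp [LinearMap.flip_apply, e00, e01, e02, e03, e10, e11, e12, e13,
            e20, e21, e22, e23, e30, e31, e32, e33]
      intro x y
      simpa using LinearMap.congr_fun (LinearMap.congr_fun this x) y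
    have hinv : ∀ x y z : g, Bil ⁅z, x⁆ y + Bil x ⁅z, y⁆ = 0 := by
      have hT : invT Bil = 0 := by
        apply tri_ext_on hspan
        simp only [Set.forall_mem_range]
        intro i j k
        fin_cases i <;> fin_cases j <;> fin_cases k <;>
          simp [invT_apply, hJP0, hJP1, hJH, hPJ0, hPJ1, hPH, hP01, hP10, hHcentral,
            e00, e01, e02, e03, e10, e11, e12, e13, e20, e21, e22, e23, e30, e31, e32, e33]
      intro x y z
      have := LinearMap.congr_fun (LinearMap.congr_fun (LinearMap.congr_fun hT z) x) y
      simpa [invT_apply] using this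
    refine ⟨hsym, hinv, ?_, e01, e00, ?_, e11, ?_⟩
    · intro a b; fin_cases a <;> fin_cases b <;> simp [kron, e22, e23, e32, e33]
    · intro a; fin_cases a <;> simp [e02, e03]
    · intro a; fin_cases a <;> simp [e12, e13]
  · intro Bil hsym hinv
    have hJP0 : ⁅J, P 0⁆ = P 1 := by
      have := hJP 0; simpa [eps, Fin.sum_univ_two] using this
    have hJP1 : ⁅J, P 1⁆ = -P 0 := by
      have := hJP 1; simpa [eps, Fin.sum_univ_two] using this
    have hJH : ⁅J, H⁆ = 0 := by rw [← lie_skew, hHcentral]; simp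
    have hPJ0 : ⁅P 0, J⁆ = -P 1 := by rw [← lie_skew, hJP0]
    have hPJ1 : ⁅P 1, J⁆ = P 0 := by rw [← lie_skew, hJP1]; simp
    have hPH : ∀ a, ⁅P a, H⁆ = 0 := fun a => by rw [← lie_skew, hHcentral]; simp
    have hP01 : ⁅P 0, P 1⁆ = H := by have := hPP 0 1; simpa [eps] using this
    have hP10 : ⁅P 1, P 0⁆ = -H := by have := hPP 1 0; simpa [eps] using this
    refine ⟨Bil J H, Bil J J, ?_, rfl, rfl, ?_, ?_, ?_⟩
    -- compute everything
    · have h22 : Bil (P 0) (P 0) = Bil J H := by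
        have := hinv J (P 0) (P 1)   -- Bil ⁅P1,J⁆ P0 + Bil J ⁅P1,P0⁆ = 0
        rw [hPJ1, hP10] at this
        simp only [map_neg, LinearMap.neg_apply] at this
        linarith [hsym (P 0) (P 0)]
      have h33 : Bil (P 1) (P 1) = Bil J H := by
        have := hinv J (P 1) (P 0)
        rw [hPJ0, hP01] at this
        simp only [map_neg, LinearMap.neg_apply] at this
        linarith
      have h23 : Bil (P 0) (P 1) = 0 := by
        have := hinv J (P 1) (P 1)
        rw [hPJ1, lie_self] at this
        simp only [map_zero] at this
        linarith
      intro a b; fin_cases a <;> fin_cases b <;>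
        simp [kron, h22, h33, h23, ← hsym (P 0) (P 1)]
    · have h02 : Bil J (P 0) = 0 := by
        have := hinv J J (P 1)
        rw [hPJ1] at this
        have hs := hsym (P 0) J
        linarith
      have h03 : Bil J (P 1) = 0 := by
        have := hinv J J (P 0)
        rw [hPJ0] at this
        simp only [map_neg, LinearMap.neg_apply] at this
        have hs := hsym (P 1) J
        linarith
      intro a; fin_cases a <;> simp [h02, h03]
    · have := hinv (P 1) H (P 0)
      rw [hP01, hPH 0] at this
      simp only [map_zero, LinearMap.map_zero] at this
      linarith
    · have h12 : Bil H (P 0) = 0 := by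
        have := hinv (P 1) (P 0) (P 0)
        rw [hP01, lie_self] at this
        simp only [map_zero] at this
        linarith
      have h13 : Bil H (P 1) = 0 := by
        have := hinv (P 1) (P 1) (P 0)
        rw [hP01] at this
        have hs := hsym (P 1) H
        linarith
      intro a; fin_cases a <;> simp [h12, h13]
  · intro χ χJ Bil hsym hinv hPPv hJHv hJJv hJPv hHHv hHPv
    constructor
    · intro hnd hχ
      subst hχ
      have hH0 : Bil H = 0 := by
        apply LinearMap.ext_on hspan
        rintro y ⟨i, rfl⟩
        fin_cases i <;>
          simp [hsym H J, hJHv, hHHv, hHPv 0, hHPv 1]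
      have : H = 0 := hnd H (fun y => by rw [hH0]; rfl)
      have hne : H ≠ 0 := by
        have := hindep.ne_zero 1
        simpa using this
      exact hne this
    · intro hχ x hx
      let b : Module.Basis (Fin 4) ℝ g := Module.Basis.mk hindep hspan.ge
      have hb : ∀ i, b i = ![J, H, P 0, P 1] i := fun i => Module.Basis.mk_apply hindep hspan.ge i
      set c : Fin 4 → ℝ := fun i => b.repr x i with hc
      have hxr : x = c 0 • J + c 1 • H + c 2 • P 0 + c 3 • P 1 := by
        have := b.sum_repr x
        rw [Fin.sum_univ_four] at this
        rw [hb 0, hb 1, hb 2, hb 3] at this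
        simpa [hc] using this.symm
      have key : ∀ y : g, Bil x y = c 0 * Bil J y + c 1 * Bil H y + c 2 * Bil (P 0) y
          + c 3 * Bil (P 1) y := by
        intro y
        rw [hxr]
        simp [map_add, map_smul]
      have k0 := hx J; rw [key J] at k0
      have k1 := hx H; rw [key H] at k1
      have k2 := hx (P 0); rw [key (P 0)] at k2
      have k3 := hx (P 1); rw [key (P 1)] at k3
      rw [hJJv, ← hsym J H, hJHv, ← hsym J (P 0), hJPv 0, ← hsym J (P 1), hJPv 1] at k0
      rw [hJHv, hHHv, ← hsym H (P 0), hHPv 0, ← hsym H (P 1), hHPv 1] at k1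
      rw [hJPv 0, hHPv 0, hPPv 0 0, hPPv 1 0] at k2
      rw [hJPv 1, hHPv 1, hPPv 0 1, hPPv 1 1] at k3
      norm_num [kron] at k0 k1 k2 k3
      have hc3 : c 2 = 0 := k2.resolve_right hχ
      have hc4 : c 3 = 0 := k3.resolve_right hχ
      have hc1 : c 0 = 0 := k1.resolve_right hχ
      have hc2 : c 1 = 0 := by
        rw [hc1] at k0
        norm_num at k0
        exact k0.resolve_right hχ
      rw [hxr, hc1, hc2, hc3, hc4]
      simp
end
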